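/- arXiv:1707.01795 — 6 statements merged into one kernel-verified Lean document; each statement's English description precedes it below -/
import Mathlib

section
/- Let T, d be positive integers with T > 2d. Let S be a real polynomial in the variables W_1, …, W_T of total degree at most d, and let Q = (W_1 + ⋯ + W_T)·S (a polynomial of degree at most d+1). Then the number of indices j ∈ {1, …, T} such that ‖Q_{j,1}‖ ≥ (20dT)^{-3^d}·‖S‖ is at least T/2. -/
open MvPolynomial Finset
set_option maxHeartbeats 1000000

/-- Squared ℓ2 norm of the coefficient vector of a multivariate polynomial
in the standard monomial basis. -/
noncomputable def coeffNormSq {σ : Type*} (P : MvPolynomial σ ℝ) : ℝ :=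
  ∑ m ∈ P.support, (P.coeff m) ^ 2

/-- ℓ2 norm of the coefficient vector of a multivariate polynomial. -/
noncomputable def coeffNorm {σ : Type*} (P : MvPolynomial σ ℝ) : ℝ :=
  Real.sqrt (coeffNormSq P)

/-- The `W_j`-linear part of a polynomial: collect all monomials in which the
variable `j` appears with exponent exactly `1` and delete the factor `W_j`. -/
noncomputable def linearPart {T : ℕ} (Q : MvPolynomial (Fin T) ℝ) (j : Fin T) :
    MvPolynomial (Fin T) ℝ :=
  ∑ m ∈ Q.support.filter (fun m => m j = 1),
    monomial (m - Finsupp.single j 1) (Q.coeff m)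

namespace Aux

variable {T : ℕ}

abbrev MvP (T : ℕ) := MvPolynomial (Fin T) ℝ

noncomputable def Zp (j : Fin T) (P : MvP T) : MvP T :=
  ∑ m ∈ P.support.filter (fun m => m j = 0), monomial m (P.coeff m)

noncomputable def Dp (j : Fin T) (P : MvP T) : MvP T :=
  ∑ m ∈ P.support.filter (fun m => m j ≠ 0),
    monomial (m - Finsupp.single j 1) (P.coeff m)

noncomputable def LA (A : Finset (Fin T)) : MvP T := ∑ i ∈ A, X i

lemma coeff_Zp (j : Fin T) (P : MvP T) (n : Fin T →₀ ℕ) :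
    coeff n (Zp j P) = if n j = 0 then coeff n P else 0 := by
  classical
  unfold Zp
  rw [coeff_sum]
  simp only [coeff_monomial]
  rw [Finset.sum_ite_eq' _ n (fun m => P.coeff m)]
  by_cases h0 : n j = 0
  · by_cases h1 : coeff n P = 0
    · simp [h0, h1]
    · simp [h0, h1, MvPolynomial.mem_support_iff]
  · simp [h0, MvPolynomial.mem_support_iff]

lemma sub_single_eq_iff {m n : Fin T →₀ ℕ} {j : Fin T} (hm : m j ≠ 0) :
    m - Finsupp.single j 1 = n ↔ m = n + Finsupp.single j 1 := by
  have hle : Finsupp.single j 1 ≤ m := by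
    rw [Finsupp.single_le_iff]; omega
  constructor
  · rintro rfl; rw [tsub_add_cancel_of_le hle]
  · rintro rfl; rw [add_tsub_cancel_right]

lemma coeff_Dp (j : Fin T) (P : MvP T) (n : Fin T →₀ ℕ) :
    coeff n (Dp j P) = coeff (n + Finsupp.single j 1) P := by
  classical
  unfold Dp
  rw [coeff_sum]
  simp only [coeff_monomial]
  rw [Finset.sum_eq_single (n + Finsupp.single j 1)]
  · rw [if_pos (add_tsub_cancel_right _ _)]
  · intro m hm hne
    rw [Finset.mem_filter] at hm
    rw [if_neg]
    intro h
    exact hne ((sub_single_eq_iff hm.2).mp h)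
  · intro hb
    rw [if_pos (add_tsub_cancel_right _ _)]
    by_contra h
    exact hb (Finset.mem_filter.mpr ⟨MvPolynomial.mem_support_iff.mpr h, by
      simp [Finsupp.add_apply, Finsupp.single_apply]⟩)

lemma coeff_linearPart (Q : MvP T) (j : Fin T) (n : Fin T →₀ ℕ) :
    coeff n (linearPart Q j) =
      if n j = 0 then coeff (n + Finsupp.single j 1) Q else 0 := by
  classical
  unfold linearPart
  rw [coeff_sum]
  simp only [coeff_monomial]
  by_cases h0 : n j = 0
  · rw [if_pos h0, Finset.sum_eq_single (n + Finsupp.single j 1)]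
    · rw [if_pos (add_tsub_cancel_right _ _)]
    · intro m hm hne
      rw [Finset.mem_filter] at hm
      rw [if_neg]
      intro h
      exact hne ((sub_single_eq_iff (by omega : m j ≠ 0)).mp h)
    · intro hb
      rw [if_pos (add_tsub_cancel_right _ _)]
      by_contra h
      exact hb (Finset.mem_filter.mpr ⟨MvPolynomial.mem_support_iff.mpr h, by
        simp [Finsupp.add_apply, Finsupp.single_apply, h0]⟩)
  · rw [if_neg h0]
    apply Finset.sum_eq_zero
    intro m hm
    rw [Finset.mem_filter] at hm
    rw [if_neg]
    intro h
    rw [sub_single_eq_iff (by omega : m j ≠ 0)] at h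
    apply h0
    have := congrArg (fun f => f j) h
    simp [Finsupp.add_apply, Finsupp.single_apply] at this
    omega

lemma lp_eq (Q : MvP T) (j : Fin T) : linearPart Q j = Zp j (Dp j Q) := by
  apply MvPolynomial.ext
  intro n
  rw [coeff_linearPart, coeff_Zp]
  by_cases h : n j = 0 <;> simp [h, coeff_Dp]
lemma decomp (j : Fin T) (P : MvP T) : P = Zp j P + X j * Dp j P := by
  apply MvPolynomial.ext
  intro n
  rw [coeff_add, coeff_Zp, coeff_X_mul', coeff_Dp]
  by_cases h : n j = 0
  · rw [if_pos h, if_neg (by simp [Finsupp.mem_support_iff, h]), add_zero]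
  · rw [if_neg h, if_pos (by simp [Finsupp.mem_support_iff, h]), zero_add,
      tsub_add_cancel_of_le (by rw [Finsupp.single_le_iff]; omega)]

lemma Zp_mul (j : Fin T) (f g : MvP T) : Zp j (f * g) = Zp j f * Zp j g := by
  apply MvPolynomial.ext
  intro n
  rw [coeff_Zp, coeff_mul, coeff_mul]
  by_cases h : n j = 0
  · rw [if_pos h]
    apply Finset.sum_congr rfl
    intro x hx
    rw [Finset.HasAntidiagonal.mem_antidiagonal] at hx
    have hj : x.1 j + x.2 j = 0 := by
      have := congrArg (fun f => f j) hx
      simpa [Finsupp.add_apply] using this.trans h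
    rw [coeff_Zp, coeff_Zp, if_pos (by omega), if_pos (by omega)]
  · rw [if_neg h]
    symm
    apply Finset.sum_eq_zero
    intro x hx
    rw [Finset.HasAntidiagonal.mem_antidiagonal] at hx
    have hj : x.1 j + x.2 j = n j := by
      have := congrArg (fun f => f j) hx
      simpa [Finsupp.add_apply] using this
    rcases Nat.eq_zero_or_pos (x.1 j) with h1 | h1
    · rw [coeff_Zp (P := g), if_neg (by omega), mul_zero]
    · rw [coeff_Zp, if_neg (by omega), zero_mul]

lemma Zp_Zp (j : Fin T) (f : MvP T) : Zp j (Zp j f) = Zp j f := by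
  apply MvPolynomial.ext
  intro n
  rw [coeff_Zp, coeff_Zp]
  by_cases h : n j = 0 <;> simp [h]

lemma Zp_C (j : Fin T) (c : ℝ) : Zp j (C c) = C c := by
  apply MvPolynomial.ext
  intro n
  rw [coeff_Zp]
  by_cases h : n j = 0
  · rw [if_pos h]
  · rw [if_neg h, coeff_C, if_neg]
    intro h0
    exact h (by rw [← h0]; rfl)

lemma Zp_one (j : Fin T) : Zp j (1 : MvP T) = 1 := by
  have := Zp_C j 1; simpa using this

lemma Zp_add (j : Fin T) (f g : MvP T) : Zp j (f + g) = Zp j f + Zp j g := by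
  apply MvPolynomial.ext
  intro n
  rw [coeff_add, coeff_Zp, coeff_Zp, coeff_Zp, coeff_add]
  by_cases h : n j = 0 <;> simp [h]

lemma Dp_add (j : Fin T) (f g : MvP T) : Dp j (f + g) = Dp j f + Dp j g := by
  apply MvPolynomial.ext
  intro n
  rw [coeff_add, coeff_Dp, coeff_Dp, coeff_Dp, coeff_add]

lemma Dp_X_mul (j : Fin T) (f : MvP T) : Dp j (X j * f) = f := by
  apply MvPolynomial.ext
  intro n
  rw [coeff_Dp, coeff_X_mul', if_pos (by simp [Finsupp.mem_support_iff]),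
    add_tsub_cancel_right]

lemma Dp_Zp (j : Fin T) (f : MvP T) : Dp j (Zp j f) = 0 := by
  apply MvPolynomial.ext
  intro n
  rw [coeff_Dp, coeff_Zp, if_neg (by simp [Finsupp.add_apply]), coeff_zero]

lemma Zp_X_mul (j : Fin T) (f : MvP T) : Zp j (X j * f) = 0 := by
  apply MvPolynomial.ext
  intro n
  rw [coeff_Zp, coeff_zero]
  by_cases h : n j = 0
  · rw [if_pos h, coeff_X_mul', if_neg (by simp [Finsupp.mem_support_iff, h])]
  · rw [if_neg h]

lemma Zp_pow (j : Fin T) (f : MvP T) (n : ℕ) : Zp j (f ^ n) = (Zp j f) ^ n := by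
  induction n with
  | zero => simpa using Zp_one j
  | succ n ih => rw [pow_succ, pow_succ, Zp_mul, ih]

lemma lp_mul (j : Fin T) (f g : MvP T) :
    linearPart (f * g) j = Zp j f * linearPart g j + linearPart f j * Zp j g := by
  rw [lp_eq, lp_eq, lp_eq]
  have key : f * g = Zp j f * Zp j g
      + X j * (Zp j f * Dp j g + Dp j f * Zp j g + X j * (Dp j f * Dp j g)) := by
    conv_lhs => rw [decomp j f, decomp j g]
    ring
  have hzz : Zp j f * Zp j g = Zp j (Zp j f * Zp j g) := by
    rw [Zp_mul, Zp_Zp, Zp_Zp]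
  rw [key, Dp_add, hzz, Dp_Zp, Dp_X_mul, zero_add, Zp_add, Zp_add, Zp_X_mul,
    add_zero, Zp_mul, Zp_mul, Zp_Zp, Zp_Zp]

lemma lp_C (j : Fin T) (c : ℝ) : linearPart (C c : MvP T) j = 0 := by
  apply MvPolynomial.ext
  intro n
  rw [coeff_linearPart, coeff_zero]
  by_cases h : n j = 0
  · rw [if_pos h, coeff_C, if_neg]
    intro h0
    have := congrArg (fun f => f j) h0
    simp [Finsupp.add_apply, Finsupp.single_apply] at this
  · rw [if_neg h]

lemma lp_one (j : Fin T) : linearPart (1 : MvP T) j = 0 := by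
  have := lp_C j 1; simpa using this

lemma lp_C_mul (j : Fin T) (c : ℝ) (f : MvP T) :
    linearPart (C c * f) j = C c * linearPart f j := by
  rw [lp_mul, Zp_C, lp_C, zero_mul, add_zero]

lemma lp_sub (j : Fin T) (f g : MvP T) :
    linearPart (f - g) j = linearPart f j - linearPart g j := by
  apply MvPolynomial.ext
  intro n
  rw [coeff_sub, coeff_linearPart, coeff_linearPart, coeff_linearPart, coeff_sub]
  by_cases h : n j = 0 <;> simp [h]

lemma Zp_LA {A : Finset (Fin T)} {j : Fin T} (hj : j ∈ A) :
    Zp j (LA A) = LA (A.erase j) := by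
  classical
  apply MvPolynomial.ext
  intro n
  unfold LA
  rw [coeff_Zp, coeff_sum, coeff_sum]
  simp only [coeff_X']
  by_cases h : n j = 0
  · rw [if_pos h]
    rw [← Finset.sum_erase A (f := fun i => if Finsupp.single i 1 = n then (1:ℝ) else 0)]
    rw [if_neg]
    intro h0
    have := congrArg (fun f => f j) h0
    simp [Finsupp.single_apply, h] at this
  · rw [if_neg h]
    symm
    apply Finset.sum_eq_zero
    intro i hi
    rw [if_neg]
    intro h0
    have hij : i ≠ j := Finset.ne_of_mem_erase hi
    have := congrArg (fun f => f j) h0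
    simp [Finsupp.single_apply, hij] at this
    exact h this.symm

lemma Dp_LA {A : Finset (Fin T)} {j : Fin T} (hj : j ∈ A) :
    Dp j (LA A) = 1 := by
  classical
  apply MvPolynomial.ext
  intro n
  unfold LA
  rw [coeff_Dp, coeff_sum]
  simp only [coeff_X']
  by_cases h : n = 0
  · subst h
    rw [Finset.sum_eq_single j]
    · rw [if_pos (by simp), coeff_one, if_pos rfl]
    · intro i hi hij
      rw [if_neg]
      intro h0
      have := congrArg (fun f => f j) h0
      simp [Finsupp.single_apply, hij, Finsupp.add_apply] at this
    · intro hb; exact absurd hj hb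
  · rw [coeff_one, if_neg (Ne.symm h)]
    apply Finset.sum_eq_zero
    intro i hi
    rw [if_neg]
    intro h0
    apply h
    have hj' := congrArg (fun f => f j) h0
    simp only [Finsupp.single_apply, Finsupp.add_apply] at hj'
    have hij : i = j := by
      by_contra hne
      rw [if_neg hne] at hj'
      simp [Finsupp.single_apply] at hj'
    subst hij
    exact add_right_cancel (h0.symm.trans (zero_add (Finsupp.single i 1)).symm)

lemma Zp_lp_comm {j k : Fin T} (h : j ≠ k) (P : MvP T) :
    Zp j (linearPart P k) = linearPart (Zp j P) k := by
  apply MvPolynomial.ext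
  intro n
  rw [coeff_Zp, coeff_linearPart, coeff_linearPart, coeff_Zp]
  have hadd : ((n + Finsupp.single k 1 : Fin T →₀ ℕ)) j = n j := by
    rw [Finsupp.add_apply, Finsupp.single_apply, if_neg (Ne.symm h), add_zero]
  by_cases h1 : n j = 0 <;> by_cases h2 : n k = 0 <;> simp [h1, h2, hadd]

lemma lp_pow_mul {A : Finset (Fin T)} {j : Fin T} (hj : j ∈ A) (s : ℕ) (G : MvP T) :
    linearPart (LA A ^ (s+1) * G) j
      = C ((s+1 : ℕ) : ℝ) * (LA (A.erase j) ^ s * Zp j G)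
        + LA (A.erase j) ^ (s+1) * linearPart G j := by
  induction s with
  | zero =>
    rw [pow_one, lp_mul, Zp_LA hj, lp_eq (LA A) j, Dp_LA hj, Zp_one]
    push_cast
    simp only [map_one]
    ring
  | succ s ih =>
    have h2 : LA A ^ (s+1+1) * G = LA A * (LA A ^ (s+1) * G) := by ring
    rw [h2, lp_mul, ih, Zp_LA hj, Zp_mul, Zp_pow, Zp_LA hj,
      lp_eq (LA A) j, Dp_LA hj, Zp_one, one_mul]
    have hcast : ((s+1+1 : ℕ) : ℝ) = ((s+1 : ℕ) : ℝ) + 1 := by push_cast; ring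
    rw [hcast, map_add, C_1]
    ring

lemma Zp_pow_mul {A : Finset (Fin T)} {j : Fin T} (hj : j ∈ A) (s : ℕ) (G : MvP T) :
    Zp j (LA A ^ s * G) = LA (A.erase j) ^ s * Zp j G := by
  rw [Zp_mul, Zp_pow, Zp_LA hj]

lemma normSq_eq {P : MvP T} {s : Finset (Fin T →₀ ℕ)} (h : P.support ⊆ s) :
    coeffNormSq P = ∑ m ∈ s, (P.coeff m) ^ 2 := by
  unfold coeffNormSq
  apply Finset.sum_subset h
  intro m _ hm
  rw [MvPolynomial.notMem_support_iff] at hm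
  rw [hm]; ring

lemma normSq_nonneg (P : MvP T) : 0 ≤ coeffNormSq P :=
  Finset.sum_nonneg fun _ _ => sq_nonneg _

lemma coeffNorm_nonneg (P : MvP T) : 0 ≤ coeffNorm P := Real.sqrt_nonneg _

lemma coeffNorm_sq (P : MvP T) : coeffNorm P ^ 2 = coeffNormSq P :=
  Real.sq_sqrt (normSq_nonneg P)

lemma coeffNorm_le_of_sq {P Q : MvP T} (h : coeffNormSq P ≤ coeffNormSq Q) :
    coeffNorm P ≤ coeffNorm Q := Real.sqrt_le_sqrt h

lemma sq_coeff_le (P : MvP T) (m : Fin T →₀ ℕ) :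
    (P.coeff m) ^ 2 ≤ coeffNormSq P := by
  by_cases hm : m ∈ P.support
  · exact Finset.single_le_sum (f := fun m => (P.coeff m)^2)
      (fun _ _ => sq_nonneg _) hm
  · rw [MvPolynomial.notMem_support_iff] at hm
    rw [hm]
    simpa using normSq_nonneg P

lemma sqrt_sum_sq_add_le {ι : Type*} (s : Finset ι) (f g : ι → ℝ) :
    Real.sqrt (∑ i ∈ s, (f i + g i) ^ 2)
      ≤ Real.sqrt (∑ i ∈ s, f i ^ 2) + Real.sqrt (∑ i ∈ s, g i ^ 2) := by
  set A := Real.sqrt (∑ i ∈ s, f i ^ 2) with hA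
  set B := Real.sqrt (∑ i ∈ s, g i ^ 2) with hB
  have hA0 : 0 ≤ A := Real.sqrt_nonneg _
  have hB0 : 0 ≤ B := Real.sqrt_nonneg _
  have hFA : ∑ i ∈ s, f i ^ 2 = A ^ 2 :=
    (Real.sq_sqrt (Finset.sum_nonneg fun _ _ => sq_nonneg _)).symm
  have hGB : ∑ i ∈ s, g i ^ 2 = B ^ 2 :=
    (Real.sq_sqrt (Finset.sum_nonneg fun _ _ => sq_nonneg _)).symm
  have hCS : (∑ i ∈ s, f i * g i) ^ 2 ≤ (A * B) ^ 2 := by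
    calc (∑ i ∈ s, f i * g i) ^ 2
        ≤ (∑ i ∈ s, f i ^ 2) * (∑ i ∈ s, g i ^ 2) :=
          Finset.sum_mul_sq_le_sq_mul_sq s f g
      _ = (A * B) ^ 2 := by rw [hFA, hGB]; ring
  have hfg : ∑ i ∈ s, f i * g i ≤ A * B := by
    nlinarith [mul_nonneg hA0 hB0]
  have hexp : ∑ i ∈ s, (f i + g i) ^ 2 ≤ (A + B) ^ 2 := by
    have : ∑ i ∈ s, (f i + g i) ^ 2
        = ∑ i ∈ s, f i ^ 2 + 2 * ∑ i ∈ s, f i * g i + ∑ i ∈ s, g i ^ 2 := by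
      rw [Finset.mul_sum, ← Finset.sum_add_distrib, ← Finset.sum_add_distrib]
      apply Finset.sum_congr rfl
      intro i _; ring
    rw [this, hFA, hGB]
    nlinarith
  calc Real.sqrt (∑ i ∈ s, (f i + g i) ^ 2) ≤ Real.sqrt ((A + B) ^ 2) :=
        Real.sqrt_le_sqrt hexp
    _ = A + B := Real.sqrt_sq (by linarith)

lemma coeffNorm_triangle (f g : MvP T) :
    coeffNorm (f + g) ≤ coeffNorm f + coeffNorm g := by
  unfold coeffNorm
  rw [normSq_eq (s := f.support ∪ g.support) (MvPolynomial.support_add),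
    normSq_eq (P := f) (s := f.support ∪ g.support) (Finset.subset_union_left),
    normSq_eq (P := g) (s := f.support ∪ g.support) (Finset.subset_union_right)]
  simpa [coeff_add] using
    sqrt_sum_sq_add_le (f.support ∪ g.support) (fun m => coeff m f) (fun m => coeff m g)

lemma coeffNorm_zero : coeffNorm (0 : MvP T) = 0 := by
  unfold coeffNorm coeffNormSq
  simp

lemma coeffNorm_neg (f : MvP T) : coeffNorm (-f) = coeffNorm f := by
  unfold coeffNorm
  congr 1
  rw [normSq_eq (P := -f) (s := f.support) (by simp [MvPolynomial.support_neg]),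
    normSq_eq (P := f) (s := f.support) subset_rfl]
  apply Finset.sum_congr rfl
  intro m _; rw [coeff_neg]; ring

lemma coeffNorm_sub_le (f g : MvP T) :
    coeffNorm (f - g) ≤ coeffNorm f + coeffNorm g := by
  rw [sub_eq_add_neg]
  calc coeffNorm (f + -g) ≤ coeffNorm f + coeffNorm (-g) := coeffNorm_triangle _ _
    _ = coeffNorm f + coeffNorm g := by rw [coeffNorm_neg]

lemma coeffNorm_sum_le {ι : Type*} (s : Finset ι) (F : ι → MvP T) :
    coeffNorm (∑ i ∈ s, F i) ≤ ∑ i ∈ s, coeffNorm (F i) := by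
  classical
  induction s using Finset.induction with
  | empty => simp [coeffNorm_zero]
  | insert a s hx ih =>
    rw [Finset.sum_insert hx, Finset.sum_insert hx]
    calc coeffNorm (F a + ∑ i ∈ s, F i)
        ≤ coeffNorm (F a) + coeffNorm (∑ i ∈ s, F i) := coeffNorm_triangle _ _
      _ ≤ coeffNorm (F a) + ∑ i ∈ s, coeffNorm (F i) := by linarith

noncomputable def shiftEmb (i : Fin T) : (Fin T →₀ ℕ) ↪ (Fin T →₀ ℕ) :=
  ⟨fun m => m + Finsupp.single i 1, fun a b hab => by
    exact add_right_cancel hab⟩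

@[simp] lemma shiftEmb_apply (i : Fin T) (m : Fin T →₀ ℕ) :
    shiftEmb i m = m + Finsupp.single i 1 := rfl

lemma coeffNorm_X_mul (i : Fin T) (f : MvP T) :
    coeffNorm (X i * f) = coeffNorm f := by
  unfold coeffNorm
  congr 1
  have hsub : (X i * f).support ⊆ f.support.map (shiftEmb i) := by
    intro m hm
    rw [MvPolynomial.mem_support_iff, coeff_X_mul'] at hm
    by_cases hi : i ∈ m.support
    · rw [if_pos hi] at hm
      rw [Finset.mem_map]
      refine ⟨m - Finsupp.single i 1, MvPolynomial.mem_support_iff.mpr hm, ?_⟩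
      show m - Finsupp.single i 1 + Finsupp.single i 1 = m
      apply tsub_add_cancel_of_le
      rw [Finsupp.single_le_iff]
      rw [Finsupp.mem_support_iff] at hi
      omega
    · rw [if_neg hi] at hm; exact absurd rfl hm
  rw [normSq_eq hsub, Finset.sum_map]
  unfold coeffNormSq
  apply Finset.sum_congr rfl
  intro m _
  have : coeff ((shiftEmb i) m) (X i * f) = coeff m f := by
    show coeff (m + Finsupp.single i 1) (X i * f) = coeff m f
    rw [coeff_X_mul', if_pos (by simp [Finsupp.mem_support_iff, Finsupp.add_apply]),
      add_tsub_cancel_right]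
  rw [this]

lemma coeffNorm_LA_mul (A : Finset (Fin T)) (f : MvP T) :
    coeffNorm (LA A * f) ≤ (A.card : ℝ) * coeffNorm f := by
  unfold LA
  rw [Finset.sum_mul]
  calc coeffNorm (∑ i ∈ A, X i * f) ≤ ∑ i ∈ A, coeffNorm (X i * f) :=
        coeffNorm_sum_le _ _
    _ = ∑ i ∈ A, coeffNorm f := by
        apply Finset.sum_congr rfl; intro i _; exact coeffNorm_X_mul i f
    _ = (A.card : ℝ) * coeffNorm f := by rw [Finset.sum_const, nsmul_eq_mul]

lemma coeffNorm_LA_pow_mul (A : Finset (Fin T)) (s : ℕ) (f : MvP T) :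
    coeffNorm (LA A ^ s * f) ≤ (A.card : ℝ) ^ s * coeffNorm f := by
  induction s with
  | zero => simp
  | succ s ih =>
    have h1 : LA A ^ (s+1) * f = LA A * (LA A ^ s * f) := by ring
    rw [h1]
    calc coeffNorm (LA A * (LA A ^ s * f))
        ≤ (A.card : ℝ) * coeffNorm (LA A ^ s * f) := coeffNorm_LA_mul _ _
      _ ≤ (A.card : ℝ) * ((A.card : ℝ) ^ s * coeffNorm f) := by
          apply mul_le_mul_of_nonneg_left ih (by positivity)
      _ = (A.card : ℝ) ^ (s+1) * coeffNorm f := by ring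

lemma coeffNorm_C_mul (c : ℝ) (f : MvP T) :
    coeffNorm (C c * f) = |c| * coeffNorm f := by
  unfold coeffNorm
  rw [normSq_eq (P := C c * f) (s := f.support)
      (fun m hm => by
        rw [MvPolynomial.mem_support_iff, coeff_C_mul] at hm
        exact MvPolynomial.mem_support_iff.mpr fun h => hm (by rw [h, mul_zero]))]
  have : ∑ m ∈ f.support, (coeff m (C c * f)) ^ 2 = c ^ 2 * coeffNormSq f := by
    unfold coeffNormSq
    rw [Finset.mul_sum]
    apply Finset.sum_congr rfl
    intro m _
    rw [coeff_C_mul]; ring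
  rw [this, Real.sqrt_mul (sq_nonneg c), Real.sqrt_sq_eq_abs]

lemma coeffNorm_C (c : ℝ) : coeffNorm (C c : MvP T) = |c| := by
  have := coeffNorm_C_mul c (1 : MvP T)
  rw [mul_one] at this
  rw [this]
  unfold coeffNorm coeffNormSq
  simp [MvPolynomial.coeff_one]

lemma normSq_Zp_le (j : Fin T) (f : MvP T) : coeffNormSq (Zp j f) ≤ coeffNormSq f := by
  have hsub : (Zp j f).support ⊆ f.support := by
    intro m hm
    rw [MvPolynomial.mem_support_iff, coeff_Zp] at hm
    rw [MvPolynomial.mem_support_iff]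
    intro h; apply hm; rw [h]; simp
  rw [normSq_eq (P := Zp j f) (s := f.support) hsub]
  unfold coeffNormSq
  apply Finset.sum_le_sum
  intro m _
  rw [coeff_Zp]
  by_cases h : m j = 0 <;> simp [h, sq_nonneg]

lemma coeffNorm_Zp_le (j : Fin T) (f : MvP T) : coeffNorm (Zp j f) ≤ coeffNorm f :=
  coeffNorm_le_of_sq (normSq_Zp_le j f)

lemma coeffNorm_lp_le (f : MvP T) (j : Fin T) :
    coeffNorm (linearPart f j) ≤ coeffNorm f := by
  apply coeffNorm_le_of_sq
  have hsub : ((linearPart f j).support).map (shiftEmb j) ⊆ f.support := by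
    intro m hm
    rw [Finset.mem_map] at hm
    obtain ⟨n, hn, rfl⟩ := hm
    rw [MvPolynomial.mem_support_iff, coeff_linearPart] at hn
    rw [MvPolynomial.mem_support_iff]
    show coeff (n + Finsupp.single j 1) f ≠ 0
    by_cases h : n j = 0
    · rw [if_pos h] at hn; exact hn
    · rw [if_neg h] at hn; exact absurd rfl hn
  calc coeffNormSq (linearPart f j)
      = ∑ m ∈ (linearPart f j).support.map (shiftEmb j), (coeff m f) ^ 2 := by
        unfold coeffNormSq
        rw [Finset.sum_map]
        apply Finset.sum_congr rfl
        intro n hn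
        rw [MvPolynomial.mem_support_iff, coeff_linearPart] at hn
        by_cases h : n j = 0
        · rw [coeff_linearPart, if_pos h]
          rfl
        · rw [if_neg h] at hn; exact absurd rfl hn
    _ ≤ coeffNormSq f := by
        rw [normSq_eq (P := f) (s := f.support) subset_rfl]
        exact Finset.sum_le_sum_of_subset_of_nonneg hsub (fun _ _ _ => sq_nonneg _)

noncomputable def w (m : Fin T →₀ ℕ) : ℝ := ∏ j : Fin T, (Nat.factorial (m j) : ℝ)

lemma one_le_w (m : Fin T →₀ ℕ) : 1 ≤ w m := by
  unfold w
  calc (1:ℝ) = ∏ _j : Fin T, (1:ℝ) := by simp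
    _ ≤ ∏ j : Fin T, (Nat.factorial (m j) : ℝ) := by
      apply Finset.prod_le_prod (fun _ _ => zero_le_one)
      intro j _
      exact_mod_cast Nat.one_le_iff_ne_zero.mpr (Nat.factorial_ne_zero _)

lemma w_nonneg (m : Fin T →₀ ℕ) : 0 ≤ w m := le_trans zero_le_one (one_le_w m)

lemma w_add_single (m : Fin T →₀ ℕ) (i : Fin T) :
    w (m + Finsupp.single i 1) = ((m i : ℝ) + 1) * w m := by
  unfold w
  rw [← Finset.mul_prod_erase Finset.univ _ (Finset.mem_univ i),
    ← Finset.mul_prod_erase Finset.univ (fun j => ((Nat.factorial (m j) : ℝ))) (Finset.mem_univ i)]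
  have h1 : (m + Finsupp.single i 1 : Fin T →₀ ℕ) i = m i + 1 := by
    rw [Finsupp.add_apply, Finsupp.single_apply, if_pos rfl]
  have h2 : ∀ j ∈ Finset.univ.erase i,
      ((Nat.factorial ((m + Finsupp.single i 1 : Fin T →₀ ℕ) j) : ℝ))
        = (Nat.factorial (m j) : ℝ) := by
    intro j hj
    have : (m + Finsupp.single i 1 : Fin T →₀ ℕ) j = m j := by
      rw [Finsupp.add_apply, Finsupp.single_apply,
        if_neg (Ne.symm (Finset.ne_of_mem_erase hj)), add_zero]
    rw [this]
  rw [Finset.prod_congr rfl h2, h1, Nat.factorial_succ]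
  push_cast
  ring

lemma prod_factorial_le {ι : Type*} (s : Finset ι) (f : ι → ℕ) :
    ∏ i ∈ s, Nat.factorial (f i) ≤ Nat.factorial (∑ i ∈ s, f i) := by
  classical
  induction s using Finset.induction with
  | empty => simp
  | insert a s hx ih =>
    rw [Finset.prod_insert hx, Finset.sum_insert hx]
    calc Nat.factorial (f a) * ∏ i ∈ s, Nat.factorial (f i)
        ≤ Nat.factorial (f a) * Nat.factorial (∑ i ∈ s, f i) :=
          Nat.mul_le_mul_left _ ih
      _ ≤ Nat.factorial (f a + ∑ i ∈ s, f i) :=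
          Nat.le_of_dvd (Nat.factorial_pos _)
            (Nat.factorial_mul_factorial_dvd_factorial_add _ _)

lemma w_le_factorial {m : Fin T →₀ ℕ} {D : ℕ} (h : (m.sum fun _ e => e) ≤ D) :
    w m ≤ (Nat.factorial D : ℝ) := by
  have hsum : (m.sum fun _ e => e) = ∑ j : Fin T, m j :=
    Finsupp.sum_fintype _ _ (fun _ => rfl)
  have h1 : ∏ j : Fin T, Nat.factorial (m j) ≤ Nat.factorial D := by
    calc ∏ j : Fin T, Nat.factorial (m j) ≤ Nat.factorial (∑ j : Fin T, m j) :=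
          prod_factorial_le _ _
      _ ≤ Nat.factorial D := Nat.factorial_le (by rw [← hsum]; exact h)
  unfold w
  exact_mod_cast Nat.cast_le.mpr h1

noncomputable def bSq (P : MvP T) : ℝ := ∑ m ∈ P.support, w m * coeff m P ^ 2

lemma bSq_eq {P : MvP T} {s : Finset (Fin T →₀ ℕ)} (h : P.support ⊆ s) :
    bSq P = ∑ m ∈ s, w m * coeff m P ^ 2 := by
  unfold bSq
  apply Finset.sum_subset h
  intro m _ hm
  rw [MvPolynomial.notMem_support_iff] at hm
  rw [hm]; ring

lemma bSq_nonneg (P : MvP T) : 0 ≤ bSq P :=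
  Finset.sum_nonneg fun m _ => mul_nonneg (w_nonneg m) (sq_nonneg _)

lemma normSq_le_bSq (P : MvP T) : coeffNormSq P ≤ bSq P := by
  unfold coeffNormSq bSq
  apply Finset.sum_le_sum
  intro m _
  exact le_mul_of_one_le_left (sq_nonneg _) (one_le_w m)

lemma bSq_le_normSq_mul {P : MvP T} {D : ℕ} (hdeg : P.totalDegree ≤ D) :
    bSq P ≤ (Nat.factorial D : ℝ) * coeffNormSq P := by
  unfold bSq coeffNormSq
  rw [Finset.mul_sum]
  apply Finset.sum_le_sum
  intro m hm
  have h1 : (m.sum fun _ e => e) ≤ D := le_trans (le_totalDegree hm) hdeg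
  exact mul_le_mul_of_nonneg_right (w_le_factorial h1) (sq_nonneg _)

noncomputable def Bform (f g : MvP T) : ℝ :=
  ∑ m ∈ f.support ∪ g.support, w m * coeff m f * coeff m g

lemma Bform_eq {f g : MvP T} {s : Finset (Fin T →₀ ℕ)} (h : f.support ⊆ s) :
    Bform f g = ∑ m ∈ s, w m * coeff m f * coeff m g := by
  unfold Bform
  have e1 : ∑ m ∈ f.support ∪ g.support, w m * coeff m f * coeff m g
      = ∑ m ∈ s ∪ g.support, w m * coeff m f * coeff m g := by
    apply Finset.sum_subset (Finset.union_subset_union h (Finset.Subset.refl _))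
    intro m _ hm
    have : coeff m f = 0 := by
      rw [← MvPolynomial.notMem_support_iff]
      intro hc
      exact hm (Finset.mem_union_left _ hc)
    rw [this]; ring
  have e2 : ∑ m ∈ s, w m * coeff m f * coeff m g
      = ∑ m ∈ s ∪ g.support, w m * coeff m f * coeff m g := by
    apply Finset.sum_subset Finset.subset_union_left
    intro m _ hm
    have : coeff m f = 0 := by
      rw [← MvPolynomial.notMem_support_iff]
      intro hc
      exact hm (h hc)
    rw [this]; ring
  rw [e1, ← e2]

lemma Bform_self (f : MvP T) : Bform f f = bSq f := by
  rw [Bform_eq (Finset.Subset.refl f.support), bSq_eq (Finset.Subset.refl f.support)]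
  apply Finset.sum_congr rfl
  intro m _; ring

lemma Bform_comm (f g : MvP T) : Bform f g = Bform g f := by
  rw [Bform_eq (s := f.support ∪ g.support) Finset.subset_union_left,
    Bform_eq (s := f.support ∪ g.support) (f := g) Finset.subset_union_right]
  apply Finset.sum_congr (by rw [Finset.union_comm])
  intro m _; ring

lemma Bform_add_right (f g h : MvP T) :
    Bform f (g + h) = Bform f g + Bform f h := by
  rw [Bform_eq (s := f.support) (Finset.Subset.refl _),
    Bform_eq (s := f.support) (Finset.Subset.refl _),
    Bform_eq (s := f.support) (Finset.Subset.refl _), ← Finset.sum_add_distrib]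
  apply Finset.sum_congr rfl
  intro m _
  rw [coeff_add]; ring

lemma Bform_zero_right (f : MvP T) : Bform f 0 = 0 := by
  rw [Bform_eq (s := f.support) (Finset.Subset.refl _)]
  apply Finset.sum_eq_zero
  intro m _
  rw [coeff_zero]; ring

lemma Bform_sum_right {ι : Type*} (f : MvP T) (s : Finset ι) (F : ι → MvP T) :
    Bform f (∑ i ∈ s, F i) = ∑ i ∈ s, Bform f (F i) := by
  classical
  induction s using Finset.induction with
  | empty => simpa using Bform_zero_right f
  | insert a s hx ih =>
    rw [Finset.sum_insert hx, Finset.sum_insert hx, Bform_add_right, ih]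

lemma Bform_sum_left {ι : Type*} (g : MvP T) (s : Finset ι) (F : ι → MvP T) :
    Bform (∑ i ∈ s, F i) g = ∑ i ∈ s, Bform (F i) g := by
  rw [Bform_comm, Bform_sum_right]
  apply Finset.sum_congr rfl
  intro i _; rw [Bform_comm]

lemma Bform_C_mul_right (f : MvP T) (a : ℝ) (g : MvP T) :
    Bform f (C a * g) = a * Bform f g := by
  rw [Bform_eq (s := f.support) (Finset.Subset.refl _),
    Bform_eq (s := f.support) (Finset.Subset.refl _), Finset.mul_sum]
  apply Finset.sum_congr rfl
  intro m _
  rw [coeff_C_mul]; ring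

lemma coeff_X_mul_shift (i : Fin T) (f : MvP T) (m : Fin T →₀ ℕ) :
    coeff (m + Finsupp.single i 1) (X i * f) = coeff m f := by
  rw [coeff_X_mul', if_pos (by simp [Finsupp.mem_support_iff, Finsupp.add_apply]),
    add_tsub_cancel_right]

lemma support_X_mul_sub (i : Fin T) (f : MvP T) :
    (X i * f).support ⊆ f.support.map (shiftEmb i) := by
  intro m hm
  rw [MvPolynomial.mem_support_iff, coeff_X_mul'] at hm
  by_cases hi : i ∈ m.support
  · rw [if_pos hi] at hm
    rw [Finset.mem_map]
    refine ⟨m - Finsupp.single i 1, MvPolynomial.mem_support_iff.mpr hm, ?_⟩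
    show m - Finsupp.single i 1 + Finsupp.single i 1 = m
    apply tsub_add_cancel_of_le
    rw [Finsupp.single_le_iff]
    rw [Finsupp.mem_support_iff] at hi
    omega
  · rw [if_neg hi] at hm; exact absurd rfl hm

lemma coeff_pderiv (i : Fin T) (g : MvP T) (n : Fin T →₀ ℕ) :
    coeff n (pderiv i g) = coeff (n + Finsupp.single i 1) g * ((n i : ℝ) + 1) := by
  classical
  conv_lhs => rw [g.as_sum]
  rw [map_sum, coeff_sum]
  simp only [pderiv_monomial, coeff_monomial]
  rw [Finset.sum_eq_single (n + Finsupp.single i 1)]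
  · rw [if_pos (add_tsub_cancel_right _ _)]
    congr 1
    have h1 : (n + Finsupp.single i 1 : Fin T →₀ ℕ) i = n i + 1 := by
      rw [Finsupp.add_apply, Finsupp.single_apply, if_pos rfl]
    rw [h1]
    push_cast
    ring
  · intro m hm hne
    by_cases hmi : m i = 0
    · split
      · simp [hmi]
      · rfl
    · rw [if_neg]
      intro h
      exact hne ((sub_single_eq_iff hmi).mp h)
  · intro hb
    rw [MvPolynomial.notMem_support_iff] at hb
    rw [if_pos (add_tsub_cancel_right _ _), hb, zero_mul]

lemma Bform_adjoint (i : Fin T) (f g : MvP T) :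
    Bform (X i * f) g = Bform f (pderiv i g) := by
  have hL : Bform (X i * f) g
      = ∑ m ∈ f.support, w (m + Finsupp.single i 1) * coeff m f
          * coeff (m + Finsupp.single i 1) g := by
    rw [Bform_eq (support_X_mul_sub i f), Finset.sum_map]
    apply Finset.sum_congr rfl
    intro m _
    rw [shiftEmb_apply, coeff_X_mul_shift]
  have hR : Bform f (pderiv i g)
      = ∑ m ∈ f.support,
          w m * coeff m f * (coeff (m + Finsupp.single i 1) g * ((m i : ℝ) + 1)) := by
    rw [Bform_eq (s := f.support) (Finset.Subset.refl _)]
    apply Finset.sum_congr rfl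
    intro m _
    rw [coeff_pderiv]
  rw [hL, hR]
  apply Finset.sum_congr rfl
  intro m _
  rw [w_add_single]
  ring

lemma pderiv_LA {A : Finset (Fin T)} {i : Fin T} (hi : i ∈ A) :
    pderiv i (LA A) = 1 := by
  unfold LA
  rw [map_sum]
  have h1 : ∀ t ∈ A, pderiv i (X t : MvP T) = if t = i then 1 else 0 := by
    intro t _
    rw [pderiv_X]
    by_cases h : t = i
    · subst h; simp
    · rw [if_neg h]
      classical
      simp [Pi.single_apply, h]
  rw [Finset.sum_congr rfl h1, Finset.sum_ite_eq' A i (fun _ => (1 : MvP T)), if_pos hi]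

lemma bSq_LA_mul (A : Finset (Fin T)) (f : MvP T) :
    (A.card : ℝ) * bSq f ≤ bSq (LA A * f) := by
  classical
  have hexp : LA A * f = ∑ i ∈ A, X i * f := by rw [LA, Finset.sum_mul]
  have h1 : bSq (LA A * f) = Bform f (∑ i ∈ A, pderiv i (LA A * f)) := by
    calc bSq (LA A * f) = Bform (∑ i ∈ A, X i * f) (LA A * f) := by
          rw [← hexp, Bform_self]
      _ = ∑ i ∈ A, Bform (X i * f) (LA A * f) := Bform_sum_left _ _ _
      _ = ∑ i ∈ A, Bform f (pderiv i (LA A * f)) :=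
          Finset.sum_congr rfl (fun i _ => Bform_adjoint i f _)
      _ = Bform f (∑ i ∈ A, pderiv i (LA A * f)) := (Bform_sum_right _ _ _).symm
  have h2 : ∑ i ∈ A, pderiv i (LA A * f)
      = C ((A.card : ℕ) : ℝ) * f + LA A * ∑ i ∈ A, pderiv i f := by
    have h3 : ∀ i ∈ A, pderiv i (LA A * f) = f + LA A * pderiv i f := by
      intro i hi
      rw [pderiv_mul, pderiv_LA hi, one_mul]
    rw [Finset.sum_congr rfl h3, Finset.sum_add_distrib, Finset.sum_const,
      ← Finset.mul_sum]
    congr 1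
    rw [← Nat.cast_smul_eq_nsmul ℝ, smul_eq_C_mul]
  have h4 : Bform f (LA A * ∑ i ∈ A, pderiv i f) = bSq (∑ i ∈ A, pderiv i f) := by
    set D := ∑ i ∈ A, pderiv i f with hD
    have hexp2 : LA A * D = ∑ i ∈ A, X i * D := by rw [LA, Finset.sum_mul]
    calc Bform f (LA A * D) = Bform (∑ i ∈ A, X i * D) f := by
          rw [Bform_comm, hexp2]
      _ = ∑ i ∈ A, Bform (X i * D) f := Bform_sum_left _ _ _
      _ = ∑ i ∈ A, Bform D (pderiv i f) :=
          Finset.sum_congr rfl (fun i _ => Bform_adjoint i D f)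
      _ = Bform D D := (Bform_sum_right _ _ _).symm
      _ = bSq D := Bform_self D
  rw [h1, h2, Bform_add_right, Bform_C_mul_right, Bform_self, h4]
  have := bSq_nonneg (∑ i ∈ A, pderiv i f)
  linarith

lemma bSq_pow_mul_ge {A : Finset (Fin T)} (hA : 1 ≤ A.card) (s : ℕ) (f : MvP T) :
    bSq f ≤ bSq (LA A ^ s * f) := by
  induction s with
  | zero => simp
  | succ s ih =>
    have h1 : LA A ^ (s+1) * f = LA A * (LA A ^ s * f) := by ring
    rw [h1]
    calc bSq f ≤ bSq (LA A ^ s * f) := ih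
      _ = 1 * bSq (LA A ^ s * f) := (one_mul _).symm
      _ ≤ (A.card : ℝ) * bSq (LA A ^ s * f) := by
          apply mul_le_mul_of_nonneg_right _ (bSq_nonneg _)
          exact_mod_cast hA
      _ ≤ bSq (LA A * (LA A ^ s * f)) := bSq_LA_mul A _

lemma norm_div_bound {A : Finset (Fin T)} {s : ℕ} {f : MvP T} {D : ℕ}
    (hA : 1 ≤ A.card) (hdeg : (LA A ^ s * f).totalDegree ≤ D) :
    coeffNorm f ≤ Real.sqrt (Nat.factorial D) * coeffNorm (LA A ^ s * f) := by
  have h1 : coeffNormSq f ≤ (Nat.factorial D : ℝ) * coeffNormSq (LA A ^ s * f) :=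
    le_trans (normSq_le_bSq f)
      (le_trans (bSq_pow_mul_ge hA s f) (bSq_le_normSq_mul hdeg))
  unfold coeffNorm
  calc Real.sqrt (coeffNormSq f)
      ≤ Real.sqrt ((Nat.factorial D : ℝ) * coeffNormSq (LA A ^ s * f)) :=
        Real.sqrt_le_sqrt h1
    _ = Real.sqrt (Nat.factorial D) * Real.sqrt (coeffNormSq (LA A ^ s * f)) :=
        Real.sqrt_mul (by positivity) _

lemma totalDegree_le_of {P : MvP T} {D : ℕ}
    (h : ∀ m ∈ P.support, (m.sum fun _ e => e) ≤ D) : P.totalDegree ≤ D :=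
  Finset.sup_le h

lemma totalDegree_LA (A : Finset (Fin T)) : (LA A).totalDegree ≤ 1 := by
  unfold LA
  apply le_trans (totalDegree_finset_sum _ _)
  apply Finset.sup_le
  intro i _
  rw [totalDegree_X]

lemma totalDegree_lp_le {P : MvP T} {e : ℕ} (h : P.totalDegree ≤ e + 1) (j : Fin T) :
    (linearPart P j).totalDegree ≤ e := by
  apply totalDegree_le_of
  intro m hm
  rw [MvPolynomial.mem_support_iff, coeff_linearPart] at hm
  by_cases h0 : m j = 0
  · rw [if_pos h0] at hm
    have hmem : (m + Finsupp.single j 1) ∈ P.support := MvPolynomial.mem_support_iff.mpr hm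
    have hsum := le_trans (le_totalDegree hmem) h
    have hadd : ((m + Finsupp.single j 1 : Fin T →₀ ℕ).sum fun _ e => e)
        = (m.sum fun _ e => e) + 1 := by
      rw [Finsupp.sum_add_index' (fun _ => rfl) (fun _ _ _ => rfl),
        Finsupp.sum_single_index rfl]
    omega
  · rw [if_neg h0] at hm; exact absurd rfl hm

lemma support_Zp_sub (j : Fin T) (G : MvP T) : (Zp j G).support ⊆ G.support := by
  intro m hm
  rw [MvPolynomial.mem_support_iff, coeff_Zp] at hm
  rw [MvPolynomial.mem_support_iff]
  intro h; apply hm; rw [h]; simp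

lemma coverage {B : Finset (Fin T)} {G : MvP T} {e : ℕ}
    (hdeg : G.totalDegree ≤ e) (hcard : e + 1 ≤ B.card) :
    coeffNormSq G ≤ ∑ j ∈ B, coeffNormSq (Zp j G) := by
  have hrepr : ∀ j ∈ B, coeffNormSq (Zp j G)
      = ∑ m ∈ G.support, (if m j = 0 then coeff m G else 0) ^ 2 := by
    intro j _
    rw [normSq_eq (support_Zp_sub j G)]
    apply Finset.sum_congr rfl
    intro m _
    rw [coeff_Zp]
  rw [Finset.sum_congr rfl hrepr, Finset.sum_comm]
  unfold coeffNormSq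
  apply Finset.sum_le_sum
  intro m hm
  have hex : ∃ j0 ∈ B, m j0 = 0 := by
    by_contra hno
    push_neg at hno
    have hBsub : B ⊆ m.support := fun j hj => Finsupp.mem_support_iff.mpr (hno j hj)
    have h1 : B.card ≤ ∑ j ∈ B, m j := by
      rw [Finset.card_eq_sum_ones]
      apply Finset.sum_le_sum
      intro j hj
      have := hno j hj; omega
    have h2 : ∑ j ∈ B, m j ≤ ∑ j ∈ m.support, m j :=
      Finset.sum_le_sum_of_subset hBsub
    have h3 : (m.sum fun _ e => e) ≤ e := le_trans (le_totalDegree hm) hdeg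
    have h4 : (m.sum fun _ e => e) = ∑ j ∈ m.support, m j := rfl
    omega
  obtain ⟨j0, hj0B, hj0⟩ := hex
  calc coeff m G ^ 2 = (if m j0 = 0 then coeff m G else 0) ^ 2 := by rw [if_pos hj0]
    _ ≤ ∑ j ∈ B, (if m j = 0 then coeff m G else 0) ^ 2 :=
      Finset.single_le_sum (f := fun j => (if m j = 0 then coeff m G else 0) ^ 2)
        (fun _ _ => sq_nonneg _) hj0B

noncomputable def cc (d T : ℕ) : ℕ → ℝ
  | 0 => Real.sqrt (Nat.factorial (d+1))
  | (e+1) => Real.sqrt T * (Real.sqrt (Nat.factorial (d+1))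
      + (T:ℝ) * (((d - e : ℕ) : ℝ) + (T:ℝ) ^ (d - e) * Real.sqrt (Nat.factorial (d+1)))
        * cc d T e)

lemma cc_nonneg (d T : ℕ) : ∀ e, 0 ≤ cc d T e
  | 0 => Real.sqrt_nonneg _
  | (e+1) => by
    have h := cc_nonneg d T e
    unfold cc
    apply mul_nonneg (Real.sqrt_nonneg _)
    apply add_nonneg (Real.sqrt_nonneg _)
    apply mul_nonneg (mul_nonneg (by positivity) _) h
    apply add_nonneg (by positivity)
    exact mul_nonneg (by positivity) (Real.sqrt_nonneg _)

lemma cc_zero (d T : ℕ) : cc d T 0 = Real.sqrt (Nat.factorial (d+1)) := rfl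

lemma cc_succ (d T e : ℕ) : cc d T (e+1)
    = Real.sqrt T * (Real.sqrt (Nat.factorial (d+1))
      + (T:ℝ) * (((d - e : ℕ) : ℝ) + (T:ℝ) ^ (d - e) * Real.sqrt (Nat.factorial (d+1)))
        * cc d T e) := rfl

lemma one_le_K (d : ℕ) : 1 ≤ Real.sqrt (Nat.factorial (d+1)) := by
  rw [show (1:ℝ) = Real.sqrt 1 from Real.sqrt_one.symm]
  apply Real.sqrt_le_sqrt
  exact_mod_cast Nat.one_le_iff_ne_zero.mpr (Nat.factorial_ne_zero _)

lemma main_claim {T d : ℕ} (hd : 1 ≤ d) (hTd : 2 * d + 1 ≤ T) :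
    ∀ e : ℕ, ∀ s : ℕ, ∀ A B : Finset (Fin T), ∀ G : MvP T, ∀ θ : ℝ,
      0 ≤ θ → 1 ≤ s → s + e ≤ d + 1 → B ⊆ A → e + 1 ≤ B.card → e + d + 1 ≤ A.card →
      G.totalDegree ≤ e →
      (∀ j ∈ B, coeffNorm (linearPart (LA A ^ s * G) j) ≤ θ) →
      coeffNorm G ≤ cc d T e * θ := by
  have hT1 : (1:ℝ) ≤ (T:ℝ) := by
    have : 1 ≤ T := by omega
    exact_mod_cast this
  set K := Real.sqrt (Nat.factorial (d+1)) with hKdef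
  have hK0 : 0 ≤ K := Real.sqrt_nonneg _
  have hK1 : 1 ≤ K := one_le_K d
  intro e
  induction e with
  | zero =>
    intro s A B G θ hθ hs hse hBA hB hA hdeg hbad
    obtain ⟨j, hj⟩ := Finset.card_pos.mp (by omega : 0 < B.card)
    have hjA := hBA hj
    obtain ⟨s', rfl⟩ : ∃ s', s = s' + 1 := ⟨s - 1, by omega⟩
    have hGC : G = C (coeff 0 G) := by
      have h0 := (totalDegree_eq_zero_iff _ G).mp (Nat.le_zero.mp hdeg)
      apply MvPolynomial.ext
      intro n
      by_cases hn : n = 0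
      · subst hn; simp
      · rw [coeff_C, if_neg (Ne.symm hn)]
        rw [← MvPolynomial.notMem_support_iff]
        intro hns
        apply hn
        ext v
        exact h0 n hns v
    set c := coeff 0 G with hc
    have hlp : linearPart (LA A ^ (s'+1) * G) j
        = LA (A.erase j) ^ s' * C (((s'+1:ℕ):ℝ) * c) := by
      conv_lhs => rw [hGC]
      rw [lp_pow_mul hjA, Zp_C, lp_C, mul_zero, add_zero, map_mul]
      ring
    have hA'1 : 1 ≤ (A.erase j).card := by
      rw [Finset.card_erase_of_mem hjA]
      omega
    have hdeg2 : (LA (A.erase j) ^ s' * C (((s'+1:ℕ):ℝ) * c)).totalDegree ≤ d + 1 := by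
      apply le_trans (totalDegree_mul _ _)
      rw [totalDegree_C, add_zero]
      apply le_trans (totalDegree_pow _ _)
      have := totalDegree_LA (A.erase j)
      calc s' * (LA (A.erase j)).totalDegree ≤ s' * 1 := Nat.mul_le_mul_left _ this
        _ ≤ d + 1 := by omega
    have hstep : coeffNorm (C (((s'+1:ℕ):ℝ) * c) : MvP T) ≤ K * θ := by
      calc coeffNorm (C (((s'+1:ℕ):ℝ) * c) : MvP T)
          ≤ K * coeffNorm (LA (A.erase j) ^ s' * C (((s'+1:ℕ):ℝ) * c)) :=
            norm_div_bound hA'1 hdeg2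
        _ ≤ K * θ := by
            apply mul_le_mul_of_nonneg_left _ hK0
            rw [← hlp]
            exact hbad j hj
    rw [coeffNorm_C] at hstep
    have habs : |c| ≤ |((s'+1:ℕ):ℝ) * c| := by
      rw [abs_mul]
      have h1 : (1:ℝ) ≤ |((s'+1:ℕ):ℝ)| := by
        rw [abs_of_nonneg (by positivity)]
        exact_mod_cast Nat.one_le_iff_ne_zero.mpr (by omega)
      nlinarith [abs_nonneg c]
    have : coeffNorm G = |c| := by rw [hGC, coeffNorm_C]
    rw [this]
    show |c| ≤ cc d T 0 * θ
    rw [cc_zero]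
    linarith
  | succ e ih =>
    intro s A B G θ hθ hs hse hBA hB hA hdeg hbad
    obtain ⟨s', rfl⟩ : ∃ s', s = s' + 1 := ⟨s - 1, by omega⟩
    set θ' := ((s'+1 : ℕ):ℝ) * θ + (T:ℝ)^(s'+1) * K * θ with hθ'def
    have hθ'0 : 0 ≤ θ' := by positivity
    have key : ∀ j ∈ B, coeffNorm (Zp j G) ≤ K * θ + (T:ℝ) * (cc d T e * θ') := by
      intro j hj
      have hjA := hBA hj
      have hA'card : (A.erase j).card = A.card - 1 := Finset.card_erase_of_mem hjA
      have hA'1 : 1 ≤ (A.erase j).card := by omega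
      have hfact : linearPart (LA A ^ (s'+1) * G) j
          = LA (A.erase j) ^ s' * (C ((s'+1:ℕ):ℝ) * Zp j G + LA (A.erase j) * linearPart G j) := by
        rw [lp_pow_mul hjA]
        ring
      have hdegLAG : (LA A ^ (s'+1) * G).totalDegree ≤ d + 1 := by
        apply le_trans (totalDegree_mul _ _)
        have h1 : (LA A ^ (s'+1)).totalDegree ≤ s' + 1 := by
          apply le_trans (totalDegree_pow _ _)
          calc (s'+1) * (LA A).totalDegree ≤ (s'+1) * 1 :=
                Nat.mul_le_mul_left _ (totalDegree_LA A)
            _ = s' + 1 := by omega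
        omega
      have hRle : coeffNorm (C ((s'+1:ℕ):ℝ) * Zp j G + LA (A.erase j) * linearPart G j)
          ≤ K * θ := by
        have hdegQ : (LA (A.erase j) ^ s'
            * (C ((s'+1:ℕ):ℝ) * Zp j G + LA (A.erase j) * linearPart G j)).totalDegree
              ≤ d + 1 := by
          rw [← hfact]
          have := totalDegree_lp_le (e := d) (by omega : (LA A ^ (s'+1) * G).totalDegree ≤ d + 1) j
          omega
        calc coeffNorm (C ((s'+1:ℕ):ℝ) * Zp j G + LA (A.erase j) * linearPart G j)
            ≤ K * coeffNorm (LA (A.erase j) ^ s'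
                * (C ((s'+1:ℕ):ℝ) * Zp j G + LA (A.erase j) * linearPart G j)) :=
              norm_div_bound hA'1 hdegQ
          _ ≤ K * θ := by
              apply mul_le_mul_of_nonneg_left _ hK0
              rw [← hfact]
              exact hbad j hj
      have htrans : ∀ k ∈ B.erase j,
          coeffNorm (linearPart (LA (A.erase j) ^ (s'+2) * linearPart G j) k) ≤ θ' := by
        intro k hk
        have hkj : k ≠ j := Finset.ne_of_mem_erase hk
        have hkB : k ∈ B := Finset.mem_of_mem_erase hk
        have hsplit : LA (A.erase j) ^ (s'+2) * linearPart G j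
            = LA (A.erase j) ^ (s'+1)
                * (C ((s'+1:ℕ):ℝ) * Zp j G + LA (A.erase j) * linearPart G j)
              - C ((s'+1:ℕ):ℝ) * Zp j (LA A ^ (s'+1) * G) := by
          rw [Zp_pow_mul hjA]
          ring
        rw [hsplit, lp_sub]
        apply le_trans (coeffNorm_sub_le _ _)
        have h1 : coeffNorm (linearPart (LA (A.erase j) ^ (s'+1)
            * (C ((s'+1:ℕ):ℝ) * Zp j G + LA (A.erase j) * linearPart G j)) k)
              ≤ (T:ℝ)^(s'+1) * (K * θ) := by
          apply le_trans (coeffNorm_lp_le _ _)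
          apply le_trans (coeffNorm_LA_pow_mul _ _ _)
          apply mul_le_mul _ hRle (coeffNorm_nonneg _) (by positivity)
          apply pow_le_pow_left₀ (by positivity)
          have : (A.erase j).card ≤ T := by
            have := Finset.card_le_univ (A.erase j)
            rwa [Fintype.card_fin] at this
          exact_mod_cast this
        have h2 : coeffNorm (linearPart (C ((s'+1:ℕ):ℝ) * Zp j (LA A ^ (s'+1) * G)) k)
            ≤ ((s'+1:ℕ):ℝ) * θ := by
          rw [lp_C_mul, coeffNorm_C_mul, abs_of_nonneg (by positivity)]
          apply mul_le_mul_of_nonneg_left _ (by positivity)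
          rw [← Zp_lp_comm (Ne.symm hkj)]
          calc coeffNorm (Zp j (linearPart (LA A ^ (s'+1) * G) k))
              ≤ coeffNorm (linearPart (LA A ^ (s'+1) * G) k) := coeffNorm_Zp_le _ _
            _ ≤ θ := hbad k hkB
        rw [hθ'def]
        linarith
      have hG1 : coeffNorm (linearPart G j) ≤ cc d T e * θ' := by
        apply ih (s'+2) (A.erase j) (B.erase j) (linearPart G j) θ' hθ'0 (by omega)
          (by omega) (Finset.erase_subset_erase j hBA) _ _
          (totalDegree_lp_le hdeg j) htrans
        · rw [Finset.card_erase_of_mem hj]; omega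
        · rw [hA'card]; omega
      have hcomb : C ((s'+1:ℕ):ℝ) * Zp j G
          = (C ((s'+1:ℕ):ℝ) * Zp j G + LA (A.erase j) * linearPart G j)
            - LA (A.erase j) * linearPart G j := by ring
      have hG0 : ((s'+1:ℕ):ℝ) * coeffNorm (Zp j G) ≤ K * θ + (T:ℝ) * (cc d T e * θ') := by
        have hCnorm : coeffNorm (C ((s'+1:ℕ):ℝ) * Zp j G)
            = ((s'+1:ℕ):ℝ) * coeffNorm (Zp j G) := by
          rw [coeffNorm_C_mul, abs_of_nonneg (by positivity)]
        rw [← hCnorm, hcomb]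
        apply le_trans (coeffNorm_sub_le _ _)
        have h3 : coeffNorm (LA (A.erase j) * linearPart G j)
            ≤ (T:ℝ) * (cc d T e * θ') := by
          apply le_trans (coeffNorm_LA_mul _ _)
          have hcardT : ((A.erase j).card : ℝ) ≤ (T:ℝ) := by
            have := Finset.card_le_univ (A.erase j)
            rw [Fintype.card_fin] at this
            exact_mod_cast this
          apply mul_le_mul hcardT hG1 (coeffNorm_nonneg _) (by linarith)
        linarith
      have hs1 : (1:ℝ) ≤ ((s'+1:ℕ):ℝ) := by exact_mod_cast (by omega : 1 ≤ s'+1)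
      nlinarith [coeffNorm_nonneg (Zp j G)]
    -- coverage step
    have hcov : coeffNormSq G ≤ ∑ j ∈ B, coeffNormSq (Zp j G) :=
      coverage hdeg (by omega)
    set M := K * θ + (T:ℝ) * (cc d T e * θ') with hM
    have hM0 : 0 ≤ M := by
      have := cc_nonneg d T e
      positivity
    have hSqM : coeffNormSq G ≤ (T:ℝ) * M ^ 2 := by
      calc coeffNormSq G ≤ ∑ j ∈ B, coeffNormSq (Zp j G) := hcov
        _ ≤ ∑ _j ∈ B, M ^ 2 := by
            apply Finset.sum_le_sum
            intro j hj
            calc coeffNormSq (Zp j G) = coeffNorm (Zp j G) ^ 2 :=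
                  (coeffNorm_sq _).symm
              _ ≤ M ^ 2 := by
                  apply pow_le_pow_left₀ (coeffNorm_nonneg _) (key j hj)
        _ = (B.card : ℝ) * M ^ 2 := by rw [Finset.sum_const, nsmul_eq_mul]
        _ ≤ (T:ℝ) * M ^ 2 := by
            apply mul_le_mul_of_nonneg_right _ (sq_nonneg _)
            have := Finset.card_le_univ B
            rw [Fintype.card_fin] at this
            exact_mod_cast this
    have hnorm : coeffNorm G ≤ Real.sqrt T * M := by
      unfold coeffNorm
      calc Real.sqrt (coeffNormSq G) ≤ Real.sqrt ((T:ℝ) * M ^ 2) :=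
            Real.sqrt_le_sqrt hSqM
        _ = Real.sqrt T * Real.sqrt (M ^ 2) := Real.sqrt_mul (by positivity) _
        _ = Real.sqrt T * M := by rw [Real.sqrt_sq hM0]
    -- now bound √T * M ≤ cc (e+1) * θ
    have hsle : s' + 1 ≤ d - e := by omega
    have hθ'le : θ' ≤ (((d - e : ℕ) : ℝ) + (T:ℝ) ^ (d - e) * K) * θ := by
      rw [hθ'def]
      have hc1 : ((s'+1:ℕ):ℝ) ≤ ((d - e : ℕ):ℝ) := by exact_mod_cast hsle
      have hc2 : (T:ℝ)^(s'+1) ≤ (T:ℝ)^(d-e) := pow_le_pow_right₀ hT1 hsle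
      have : (T:ℝ)^(s'+1) * K * θ ≤ (T:ℝ)^(d-e) * K * θ := by
        apply mul_le_mul_of_nonneg_right _ hθ
        apply mul_le_mul_of_nonneg_right hc2 hK0
      nlinarith
    have hMle : M ≤ (K + (T:ℝ) * (((d - e : ℕ) : ℝ) + (T:ℝ) ^ (d - e) * K) * cc d T e) * θ := by
      rw [hM]
      have h1 : (T:ℝ) * (cc d T e * θ')
          ≤ (T:ℝ) * (cc d T e * ((((d - e : ℕ) : ℝ) + (T:ℝ) ^ (d - e) * K) * θ)) := by
        apply mul_le_mul_of_nonneg_left _ (by positivity)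
        apply mul_le_mul_of_nonneg_left hθ'le (cc_nonneg d T e)
      nlinarith
    calc coeffNorm G ≤ Real.sqrt T * M := hnorm
      _ ≤ Real.sqrt T
          * ((K + (T:ℝ) * (((d - e : ℕ) : ℝ) + (T:ℝ) ^ (d - e) * K) * cc d T e) * θ) :=
          mul_le_mul_of_nonneg_left hMle (Real.sqrt_nonneg _)
      _ = cc d T (e+1) * θ := by
          rw [cc_succ, hKdef]
          ring

lemma sqrt_le_self' {x : ℝ} (hx : 1 ≤ x) : Real.sqrt x ≤ x := by
  have h0 : (0:ℝ) ≤ x := by linarith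
  have h1 := Real.sq_sqrt h0
  have h2 : 1 ≤ Real.sqrt x := by
    rw [show (1:ℝ) = Real.sqrt 1 from Real.sqrt_one.symm]
    exact Real.sqrt_le_sqrt hx
  nlinarith

def uu (d : ℕ) : ℕ → ℕ
  | 0 => 1
  | (e+1) => uu d e + (d - e) + 2

lemma cc_bound {d T : ℕ} (hd : 1 ≤ d) (hTd : 2*d+1 ≤ T) :
    ∀ e, cc d T e ≤ (3 * Real.sqrt (Nat.factorial (d+1)))^(e+1) * (T:ℝ)^(uu d e) := by
  set K := Real.sqrt (Nat.factorial (d+1)) with hK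
  have hK1 : 1 ≤ K := one_le_K d
  have hK0 : 0 ≤ K := by linarith
  have hT1 : (1:ℝ) ≤ T := by exact_mod_cast (by omega : 1 ≤ T)
  have hT0 : (0:ℝ) ≤ T := by linarith
  intro e
  induction e with
  | zero =>
    rw [cc_zero, pow_one]
    have huu : uu d 0 = 1 := rfl
    rw [huu, pow_one]
    nlinarith
  | succ e ih =>
    rw [cc_succ]
    set a := (T:ℝ)^(d-e) with ha
    have ha1 : 1 ≤ a := by
      rw [ha]
      calc (1:ℝ) = 1^(d-e) := (one_pow _).symm
        _ ≤ (T:ℝ)^(d-e) := pow_le_pow_left₀ zero_le_one hT1 _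
    have ha0 : 0 ≤ a := by linarith
    have hΛ : ((d - e:ℕ):ℝ) + a * K ≤ 2*a*K := by
      have h1 : ((d-e:ℕ):ℝ) ≤ a * K := by
        rcases Nat.eq_zero_or_pos (d - e) with h | h
        · rw [h]; push_cast; positivity
        · have hde : ((d-e:ℕ):ℝ) ≤ (T:ℝ) := by exact_mod_cast (by omega : d - e ≤ T)
          have hTa : (T:ℝ) ≤ a := by
            rw [ha]
            calc (T:ℝ) = (T:ℝ)^1 := (pow_one _).symm
              _ ≤ (T:ℝ)^(d-e) := pow_le_pow_right₀ hT1 (by omega)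
          nlinarith
      linarith
    have hΛ0 : (0:ℝ) ≤ ((d - e:ℕ):ℝ) + a * K := by positivity
    set P := (3*K)^(e+1) * (T:ℝ)^(uu d e) with hP
    have hP0 : 0 ≤ P := by positivity
    have hP1 : 1 ≤ P := by
      have h1 : (1:ℝ) ≤ (3*K)^(e+1) := by
        calc (1:ℝ) = 1^(e+1) := (one_pow _).symm
          _ ≤ (3*K)^(e+1) := pow_le_pow_left₀ zero_le_one (by linarith) _
      have h2 : (1:ℝ) ≤ (T:ℝ)^(uu d e) := by
        calc (1:ℝ) = 1^(uu d e) := (one_pow _).symm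
          _ ≤ (T:ℝ)^(uu d e) := pow_le_pow_left₀ zero_le_one hT1 _
      nlinarith
    have hc0 := cc_nonneg d T e
    have hstep : K + (T:ℝ) * (((d - e:ℕ):ℝ) + a * K) * cc d T e
        ≤ 3*K*(a*(T:ℝ)*P) := by
      have m1 : (T:ℝ) * (((d-e:ℕ):ℝ) + a*K) * cc d T e ≤ (T:ℝ) * (2*a*K) * P := by
        have hmm := mul_le_mul hΛ ih hc0 (by positivity : (0:ℝ) ≤ 2*a*K)
        calc (T:ℝ) * (((d-e:ℕ):ℝ) + a*K) * cc d T e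
            = (T:ℝ) * ((((d-e:ℕ):ℝ) + a*K) * cc d T e) := by ring
          _ ≤ (T:ℝ) * ((2*a*K) * P) := mul_le_mul_of_nonneg_left hmm hT0
          _ = (T:ℝ) * (2*a*K) * P := by ring
      have h5 : (1:ℝ) ≤ a * (T:ℝ) := by nlinarith
      have h6 : (1:ℝ) ≤ a * (T:ℝ) * P := by nlinarith
      have m2 : K ≤ K * (a*(T:ℝ)*P) :=
        le_mul_of_one_le_right (by linarith) h6
      nlinarith
    have hsq : Real.sqrt T ≤ (T:ℝ) := sqrt_le_self' hT1
    have hLHS : Real.sqrt T * (K + (T:ℝ) * (((d - e:ℕ):ℝ) + a * K) * cc d T e)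
        ≤ (T:ℝ) * (3*K*(a*(T:ℝ)*P)) := by
      apply mul_le_mul hsq hstep _ hT0
      exact add_nonneg hK0 (mul_nonneg (mul_nonneg hT0 hΛ0) hc0)
    apply le_trans hLHS
    have heq : (T:ℝ) * (3*K*(a*(T:ℝ)*P)) = (3*K)^(e+1+1) * (T:ℝ)^(uu d (e+1)) := by
      have huu1 : uu d (e+1) = uu d e + (d - e) + 2 := rfl
      rw [huu1, hP, ha,
        show (3*K)^(e+1+1) = (3*K)^(e+1)*(3*K) from pow_succ _ _,
        show (T:ℝ)^(uu d e + (d-e) + 2)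
          = (T:ℝ)^(uu d e) * (T:ℝ)^(d-e) * (T:ℝ)^2 from by rw [pow_add, pow_add]]
      ring
    rw [heq]

lemma uu_le (d : ℕ) : ∀ e, uu d e ≤ e * (d+2) + 1 := by
  intro e
  induction e with
  | zero => simp [uu]
  | succ e ih =>
    have h1 : uu d (e+1) = uu d e + (d - e) + 2 := rfl
    have h2 : d - e ≤ d := by omega
    have h3 : (e+1) * (d+2) + 1 = e * (d+2) + 1 + d + 2 := by ring
    omega

lemma sq_le_pow3 : ∀ d, 2 ≤ d → (d+1)^2 ≤ 3^d := by
  intro d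
  induction d with
  | zero => omega
  | succ d ih =>
    intro hd
    rcases Nat.lt_or_ge d 2 with h | h
    · interval_cases d
      · omega
      · norm_num
    · have h1 := ih h
      have h2 : (d+2)^2 ≤ 3 * (d+1)^2 := by nlinarith
      calc (d+1+1)^2 = (d+2)^2 := by ring
        _ ≤ 3 * (d+1)^2 := h2
        _ ≤ 3 * 3^d := by omega
        _ = 3^(d+1) := by rw [pow_succ]; ring

lemma sq_le_two_pow3 : ∀ d, 1 ≤ d → (d+1)^2 ≤ 2 * 3^d := by
  intro d hd
  rcases Nat.lt_or_ge d 2 with h | h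
  · interval_cases d
    norm_num
  · have := sq_le_pow3 d h
    omega

lemma nat_key (d : ℕ) (hd : 1 ≤ d) :
    (9 * Nat.factorial (d+1))^(d+1) < (20*d)^(2*3^d) := by
  have hdpos : 0 < d := hd
  have h1 : 9 * Nat.factorial (d+1) < (20*d)^(d+1) := by
    have hf : Nat.factorial (d+1) ≤ (d+1)^(d+1) := Nat.factorial_le_pow _
    have hd1 : (d+1)^(d+1) ≤ (2*d)^(d+1) :=
      Nat.pow_le_pow_left (by omega) _
    have hsplit : (20*d)^(d+1) = 10^(d+1) * (2*d)^(d+1) := by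
      rw [← Nat.mul_pow]
      congr 1
      ring
    have h9 : 9 < 10^(d+1) := by
      calc 9 < 10 := by norm_num
        _ ≤ 10^(d+1) := Nat.le_self_pow (by omega) 10
    have hpos2 : 0 < (2*d)^(d+1) := Nat.pow_pos (by omega)
    calc 9 * Nat.factorial (d+1) ≤ 9 * (2*d)^(d+1) := by
          apply Nat.mul_le_mul_left
          omega
      _ < 10^(d+1) * (2*d)^(d+1) := by
          exact (Nat.mul_lt_mul_right hpos2).mpr h9
      _ = (20*d)^(d+1) := hsplit.symm
  calc (9 * Nat.factorial (d+1))^(d+1) < ((20*d)^(d+1))^(d+1) :=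
        Nat.pow_lt_pow_left h1 (by omega)
    _ = (20*d)^((d+1)*(d+1)) := by rw [← pow_mul]
    _ = (20*d)^((d+1)^2) := by rw [sq]
    _ ≤ (20*d)^(2*3^d) := Nat.pow_le_pow_right (by omega) (sq_le_two_pow3 d hd)

lemma realK_lt (d : ℕ) (hd : 1 ≤ d) :
    (3 * Real.sqrt (Nat.factorial (d+1)))^(d+1) < (20*(d:ℝ))^(3^d) := by
  have hK0 : 0 ≤ Real.sqrt (Nat.factorial (d+1)) := Real.sqrt_nonneg _
  have hKsq : Real.sqrt (Nat.factorial (d+1)) ^ 2 = ((Nat.factorial (d+1) : ℕ) : ℝ) :=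
    Real.sq_sqrt (by positivity)
  have hA0 : (0:ℝ) ≤ (3 * Real.sqrt (Nat.factorial (d+1)))^(d+1) := by positivity
  have hB0 : (0:ℝ) ≤ (20*(d:ℝ))^(3^d) := by positivity
  have hsq : ((3 * Real.sqrt (Nat.factorial (d+1)))^(d+1))^2
      < ((20*(d:ℝ))^(3^d))^2 := by
    have hA2 : ((3 * Real.sqrt (Nat.factorial (d+1)))^(d+1))^2
        = (((9 * Nat.factorial (d+1))^(d+1) : ℕ) : ℝ) := by
      rw [← pow_mul, mul_comm (d+1) 2, pow_mul, mul_pow, hKsq]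
      push_cast
      ring
    have hB2 : (((20*(d:ℝ))^(3^d))^2) = (((20*d)^(2*3^d) : ℕ) : ℝ) := by
      rw [← pow_mul, mul_comm (3^d) 2]
      push_cast
      ring
    rw [hA2, hB2]
    exact_mod_cast nat_key d hd
  nlinarith

lemma cc_lt_bound {d T : ℕ} (hd : 1 ≤ d) (hTd : 2*d+1 ≤ T) :
    cc d T d < (20*(d:ℝ)*(T:ℝ))^(3^d) := by
  have hT1 : (1:ℝ) ≤ T := by exact_mod_cast (by omega : 1 ≤ T)
  have hT0 : (0:ℝ) ≤ T := by linarith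
  rcases Nat.lt_or_ge d 2 with hd1 | hd2
  · -- d = 1
    have hd1' : d = 1 := by omega
    subst hd1'
    have hT3 : (3:ℝ) ≤ T := by exact_mod_cast (by omega : 3 ≤ T)
    have hcc : cc 1 T 1
        = Real.sqrt T * (Real.sqrt 2 + (T:ℝ) * (1 + (T:ℝ) * Real.sqrt 2) * Real.sqrt 2) := by
      rw [cc_succ, cc_zero]
      norm_num [Nat.factorial]
    have hs2 : Real.sqrt 2 ^ 2 = 2 := Real.sq_sqrt (by norm_num)
    have hs20 : (0:ℝ) ≤ Real.sqrt 2 := Real.sqrt_nonneg _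
    have hs22 : Real.sqrt 2 ≤ 2 := by nlinarith
    have hsqT : Real.sqrt T ≤ (T:ℝ) := sqrt_le_self' hT1
    have e1 : (T:ℝ) * (1 + (T:ℝ)*Real.sqrt 2)*Real.sqrt 2
        = (T:ℝ)*Real.sqrt 2 + (T:ℝ)^2*(Real.sqrt 2^2) := by ring
    have hb : Real.sqrt 2 + (T:ℝ) * (1 + (T:ℝ) * Real.sqrt 2) * Real.sqrt 2
        ≤ 2 + (T:ℝ)*(1 + (T:ℝ)*2)*2 := by
      rw [e1, hs2]
      have h7 : (T:ℝ)*Real.sqrt 2 ≤ (T:ℝ)*2 := mul_le_mul_of_nonneg_left hs22 hT0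
      nlinarith [sq_nonneg (T:ℝ)]
    have hb0 : (0:ℝ) ≤ Real.sqrt 2 + (T:ℝ) * (1 + (T:ℝ) * Real.sqrt 2) * Real.sqrt 2 := by
      positivity
    have h20 : (20*((1:ℕ):ℝ)*(T:ℝ))^(3^1) = 8000*(T:ℝ)^3 := by
      rw [pow_one]
      push_cast
      ring
    rw [hcc]
    calc Real.sqrt T * (Real.sqrt 2 + (T:ℝ) * (1 + (T:ℝ) * Real.sqrt 2) * Real.sqrt 2)
        ≤ (T:ℝ) * (2 + (T:ℝ)*(1 + (T:ℝ)*2)*2) := mul_le_mul hsqT hb hb0 hT0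
      _ < 8000*(T:ℝ)^3 := by nlinarith
      _ = (20*((1:ℕ):ℝ)*(T:ℝ))^(3^1) := h20.symm
  · -- d ≥ 2
    have h1 := cc_bound hd hTd d
    have h2 : (T:ℝ)^(uu d d) ≤ (T:ℝ)^(3^d) := by
      apply pow_le_pow_right₀ hT1
      calc uu d d ≤ d*(d+2)+1 := uu_le d d
        _ = (d+1)^2 := by ring
        _ ≤ 3^d := sq_le_pow3 d hd2
    have h3 := realK_lt d hd
    have hTpow : (0:ℝ) < (T:ℝ)^(3^d) := pow_pos (by linarith) _
    calc cc d T d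
        ≤ (3 * Real.sqrt (Nat.factorial (d+1)))^(d+1) * (T:ℝ)^(uu d d) := h1
      _ ≤ (3 * Real.sqrt (Nat.factorial (d+1)))^(d+1) * (T:ℝ)^(3^d) :=
          mul_le_mul_of_nonneg_left h2 (by positivity)
      _ < (20*(d:ℝ))^(3^d) * (T:ℝ)^(3^d) := mul_lt_mul_of_pos_right h3 hTpow
      _ = (20*(d:ℝ)*(T:ℝ))^(3^d) := (mul_pow _ _ _).symm

lemma LA_def (A : Finset (Fin T)) : LA A = ∑ i ∈ A, X i := rfl

end Aux

theorem stmt0 (T d : ℕ) (hT : 0 < T) (hd : 0 < d) (hTd : 2 * d < T)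
    (S : MvPolynomial (Fin T) ℝ) (hS : S.totalDegree ≤ d)
    (Q : MvPolynomial (Fin T) ℝ) (hQ : Q = (∑ i : Fin T, X i) * S) :
    (T : ℝ) / 2 ≤
      ((Finset.univ.filter (fun j : Fin T =>
        ((20 * d * T : ℝ) ^ (3 ^ d))⁻¹ * coeffNorm S ≤ coeffNorm (linearPart Q j))).card : ℝ) := by
  by_cases hS0 : S = 0
  · have hall : ∀ j : Fin T, ((20 * d * T : ℝ) ^ (3 ^ d))⁻¹ * coeffNorm S
        ≤ coeffNorm (linearPart Q j) := by
      intro j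
      rw [hS0, Aux.coeffNorm_zero, mul_zero]
      exact Aux.coeffNorm_nonneg _
    rw [Finset.filter_true_of_mem (fun j _ => hall j), Finset.card_univ, Fintype.card_fin]
    have h0 : (0:ℝ) ≤ (T:ℝ) := by positivity
    linarith
  · set ε := ((20 * (d:ℝ) * (T:ℝ)) ^ (3 ^ d))⁻¹ with hε
    have hd1 : 1 ≤ d := hd
    have hT1 : 1 ≤ T := hT
    have hbase : (0:ℝ) < 20 * (d:ℝ) * (T:ℝ) := by
      have h1 : (1:ℝ) ≤ (d:ℝ) := by exact_mod_cast hd1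
      have h2 : (1:ℝ) ≤ (T:ℝ) := by exact_mod_cast hT1
      nlinarith
    have hpow : (0:ℝ) < (20 * (d:ℝ) * (T:ℝ)) ^ (3 ^ d) := pow_pos hbase _
    have hε0 : 0 < ε := inv_pos.mpr hpow
    have hnormS : 0 < coeffNorm S := by
      obtain ⟨m, hm⟩ : ∃ m, MvPolynomial.coeff m S ≠ 0 := by
        by_contra h
        push_neg at h
        apply hS0
        apply MvPolynomial.ext
        intro m
        rw [h m, MvPolynomial.coeff_zero]
      apply Real.sqrt_pos.mpr
      calc (0:ℝ) < MvPolynomial.coeff m S ^ 2 := by positivity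
        _ ≤ coeffNormSq S := Aux.sq_coeff_le S m
    have hbadcard : (Finset.univ.filter (fun j : Fin T =>
        ¬ (ε * coeffNorm S ≤ coeffNorm (linearPart Q j)))).card ≤ d := by
      by_contra hbig
      have hbig' := Nat.lt_of_not_le hbig
      obtain ⟨B, hBsub, hBcard⟩ := Finset.exists_subset_card_eq
        (show d + 1 ≤ (Finset.univ.filter (fun j : Fin T =>
          ¬ (ε * coeffNorm S ≤ coeffNorm (linearPart Q j)))).card from by omega)
      have hQLA : Aux.LA (Finset.univ : Finset (Fin T)) ^ 1 * S = Q := by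
        rw [pow_one, hQ, Aux.LA_def]
      have hbad : ∀ j ∈ B, coeffNorm (linearPart (Aux.LA Finset.univ ^ 1 * S) j)
          ≤ ε * coeffNorm S := by
        intro j hj
        have hmem := hBsub hj
        rw [Finset.mem_filter] at hmem
        rw [hQLA]
        exact le_of_not_ge hmem.2
      have hclaim := Aux.main_claim hd1 (by omega) d 1 Finset.univ B S (ε * coeffNorm S)
        (by positivity) le_rfl (by omega) (Finset.subset_univ B) (by omega)
        (by rw [Finset.card_univ, Fintype.card_fin]; omega) hS hbad
      have hlt : Aux.cc d T d * ε < 1 := by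
        have h2 := Aux.cc_lt_bound hd1 (by omega : 2*d+1 ≤ T)
        calc Aux.cc d T d * ε < (20*(d:ℝ)*(T:ℝ))^(3^d) * ε :=
              mul_lt_mul_of_pos_right h2 hε0
          _ = 1 := by rw [hε]; field_simp
      have hmul := mul_lt_mul_of_pos_right hlt hnormS
      nlinarith [hclaim, hmul]
    have hcount := Finset.card_filter_add_card_filter_not
      (s := (Finset.univ : Finset (Fin T)))
      (p := fun j => ε * coeffNorm S ≤ coeffNorm (linearPart Q j))
    rw [Finset.card_univ, Fintype.card_fin] at hcount
    have hgood : T - d ≤ (Finset.univ.filter (fun j : Fin T =>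
        ε * coeffNorm S ≤ coeffNorm (linearPart Q j))).card := by omega
    have hgoodR : ((T - d : ℕ):ℝ) ≤ ((Finset.univ.filter (fun j : Fin T =>
        ε * coeffNorm S ≤ coeffNorm (linearPart Q j))).card : ℝ) := Nat.cast_le.mpr hgood
    have hcast : ((T - d : ℕ):ℝ) = (T:ℝ) - (d:ℝ) := by
      rw [Nat.cast_sub (by omega)]
    have h2d : ((2*d:ℕ):ℝ) ≤ (T:ℝ) := by exact_mod_cast (by omega : 2*d ≤ T)
    have hd2 : (d:ℝ) ≤ (T:ℝ)/2 := by push_cast at h2d; linarith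
    calc (T:ℝ)/2 = (T:ℝ) - (T:ℝ)/2 := by ring
      _ ≤ (T:ℝ) - (d:ℝ) := by linarith
      _ = ((T - d:ℕ):ℝ) := hcast.symm
      _ ≤ _ := hgoodR
end

section
/- Let d ≥ 1 be an integer and a ≥ 1 a real number. Let X, Y, Z be three variables. Suppose S_1(Y,Z) and S_2(X,Z) are real polynomials of total degree at most d−1, R_1(X,Y,Z) and R_2(X,Y,Z) are real polynomials of total degree at most d−2, and Δ^X(X,Y,Z), Δ^Y(X,Y,Z) are real polynomials of total degree at most d, satisfying the identity (aX − Y − Z)·S_1(Y,Z) + Δ^X(X,Y,Z) + X²·R_1(X,Y,Z) = (aY − X − Z)·S_2(X,Z) + Δ^Y(X,Y,Z) + Y²·R_2(X,Y,Z). Then there exist real polynomials C(Z) of degree at most d−2, A_1(Y,Z) of total degree at most d−3 (the zero polynomial when d < 3), and Δ(Y,Z) of total degree at most d−1, such that S_1(Y,Z) = ((a+1)Y − Z)·C(Z) + Y²·A_1(Y,Z) + Δ(Y,Z) and ‖Δ‖ ≤ 20a·max(‖Δ^X‖, ‖Δ^Y‖). -/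
open MvPolynomial

lemma vr_normSq_nonneg {σ : Type*} (P : MvPolynomial σ ℝ) : 0 ≤ coeffNormSq P :=
  Finset.sum_nonneg fun _ _ => sq_nonneg _

lemma vr_norm_nonneg {σ : Type*} (P : MvPolynomial σ ℝ) : 0 ≤ coeffNorm P :=
  Real.sqrt_nonneg _

lemma vr_normSq_eq {σ : Type*} (P : MvPolynomial σ ℝ) : coeffNormSq P = coeffNorm P ^ 2 :=
  (Real.sq_sqrt (vr_normSq_nonneg P)).symm

lemma vr_sum_le {σ : Type*} [DecidableEq σ] (P : MvPolynomial σ ℝ) (T : Finset (σ →₀ ℕ)) :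
    ∑ m ∈ T, P.coeff m ^ 2 ≤ coeffNormSq P := by
  classical
  have h1 : ∑ m ∈ T, P.coeff m ^ 2 = ∑ m ∈ T ∩ P.support, P.coeff m ^ 2 := by
    refine (Finset.sum_subset Finset.inter_subset_left ?_).symm
    intro m hm hnm
    have : m ∉ P.support := fun h => hnm (Finset.mem_inter.2 ⟨hm, h⟩)
    rw [MvPolynomial.notMem_support_iff.1 this]
    norm_num
  rw [h1]
  exact Finset.sum_le_sum_of_subset_of_nonneg Finset.inter_subset_right
    (fun _ _ _ => sq_nonneg _)

lemma vr_fin3_eq_single (m : Fin 3 →₀ ℕ) (h0 : m 0 = 0) (h1 : m 1 = 0) :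
    m = Finsupp.single 2 (m 2) := by
  ext i
  fin_cases i <;> simp [h0, h1, Finsupp.single_apply]

lemma vr_degsum (f : Fin 3 →₀ ℕ) : (f.sum fun _ e => e) = f 0 + f 1 + f 2 := by
  rw [Finsupp.sum_fintype]
  · exact Fin.sum_univ_three f
  · intro; rfl

lemma vr_degsum' (f : Fin 3 →₀ ℕ) : (f.sum fun _ ↦ id) = f 0 + f 1 + f 2 :=
  vr_degsum f

lemma vr_coeff_mul_X_eq_zero (p : MvPolynomial (Fin 3) ℝ) (m : Fin 3 →₀ ℕ) (s : Fin 3)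
    (h : m s = 0) : MvPolynomial.coeff m (p * X s) = 0 := by
  classical
  rw [coeff_mul_X', if_neg]
  simp [Finsupp.mem_support_iff, h]

lemma vr_coeff_X_mul_eq_zero (p : MvPolynomial (Fin 3) ℝ) (m : Fin 3 →₀ ℕ) (s : Fin 3)
    (h : m s = 0) : MvPolynomial.coeff m (X s * p) = 0 := by
  classical
  rw [coeff_X_mul', if_neg]
  simp [Finsupp.mem_support_iff, h]

lemma vr_four_sq (x y z u : ℝ) : (x - y + z - u)^2 ≤ 4*(x^2+y^2+z^2+u^2) := by
  nlinarith [sq_nonneg (x+y), sq_nonneg (z+u), sq_nonneg (x - y - z + u), sq_nonneg (x+y+z+u),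
    sq_nonneg (x - y + z - u)]

lemma vr_part (s : Finset (Fin 3 →₀ ℕ)) (f : (Fin 3 →₀ ℕ) → MvPolynomial (Fin 3) ℝ) :
    ∑ m ∈ s, f m = ∑ m ∈ s.filter (fun m => m 1 = 0), f m
      + ∑ m ∈ s.filter (fun m => m 1 = 1), f m
      + ∑ m ∈ s.filter (fun m => 2 ≤ m 1), f m := by
  classical
  have e1 : (s.filter (fun m => ¬ m 1 = 0)).filter (fun m => m 1 = 1)
      = s.filter (fun m => m 1 = 1) := by
    rw [Finset.filter_filter]
    apply Finset.filter_congr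
    intro m _
    constructor
    · exact fun h => h.2
    · intro h; exact ⟨by omega, h⟩
  have e2 : (s.filter (fun m => ¬ m 1 = 0)).filter (fun m => ¬ m 1 = 1)
      = s.filter (fun m => 2 ≤ m 1) := by
    rw [Finset.filter_filter]
    apply Finset.filter_congr
    intro m _
    constructor
    · intro h; omega
    · intro h; omega
  rw [← Finset.sum_filter_add_sum_filter_not s (fun m => m 1 = 0) f, add_assoc]
  congr 1
  rw [← Finset.sum_filter_add_sum_filter_not (s.filter (fun m => ¬ m 1 = 0))
    (fun m => m 1 = 1) f, e1, e2]

set_option maxHeartbeats 2000000 in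
/-- Variable Removal Lemma. Variables are indexed by `Fin 3`:
`X = X 0`, `Y = X 1`, `Z = X 2`. -/
theorem stmt1 (d : ℕ) (hd : 1 ≤ d) (a : ℝ) (ha : 1 ≤ a)
    (S1 S2 R1 R2 DX DY : MvPolynomial (Fin 3) ℝ)
    -- S1 is a polynomial in Y, Z only; S2 in X, Z only
    (hS1v : ∀ m ∈ S1.support, m 0 = 0)
    (hS2v : ∀ m ∈ S2.support, m 1 = 0)
    (hS1d : S1.totalDegree ≤ d - 1)
    (hS2d : S2.totalDegree ≤ d - 1)
    (hR1d : R1.totalDegree ≤ d - 2) (hR1z : d < 2 → R1 = 0)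
    (hR2d : R2.totalDegree ≤ d - 2) (hR2z : d < 2 → R2 = 0)
    (hDXd : DX.totalDegree ≤ d) (hDYd : DY.totalDegree ≤ d)
    (hid : (C a * X 0 - X 1 - X 2) * S1 + DX + (X 0) ^ 2 * R1
         = (C a * X 1 - X 0 - X 2) * S2 + DY + (X 1) ^ 2 * R2) :
    ∃ Cz A1 Δ : MvPolynomial (Fin 3) ℝ,
      -- C is a polynomial in Z only, of degree at most d - 2
      (∀ m ∈ Cz.support, m 0 = 0 ∧ m 1 = 0) ∧
      Cz.totalDegree ≤ d - 2 ∧ (d < 2 → Cz = 0) ∧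
      -- A1 is a polynomial in Y, Z only, of degree at most d - 3
      (∀ m ∈ A1.support, m 0 = 0) ∧
      A1.totalDegree ≤ d - 3 ∧ (d < 3 → A1 = 0) ∧
      -- Δ is a polynomial in Y, Z only, of degree at most d - 1
      (∀ m ∈ Δ.support, m 0 = 0) ∧
      Δ.totalDegree ≤ d - 1 ∧
      S1 = (C (a + 1) * X 1 - X 2) * Cz + (X 1) ^ 2 * A1 + Δ ∧
      coeffNorm Δ ≤ 20 * a * max (coeffNorm DX) (coeffNorm DY) := by
  classical
  have hane : a + 1 ≠ 0 := by linarith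
  set F0 := S1.support.filter (fun m => m 1 = 0) with hF0def
  set F1 := S1.support.filter (fun m => m 1 = 1) with hF1def
  set F2 := S1.support.filter (fun m => 2 ≤ m 1) with hF2def
  set s0p : MvPolynomial (Fin 3) ℝ := ∑ m ∈ F0, monomial m (S1.coeff m) with hs0p
  set s1p : MvPolynomial (Fin 3) ℝ :=
    ∑ m ∈ F1, monomial (m - Finsupp.single 1 1) (S1.coeff m) with hs1p
  set A1 : MvPolynomial (Fin 3) ℝ :=
    ∑ m ∈ F2, monomial (m - Finsupp.single 1 2) (S1.coeff m) with hA1def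
  set Cz : MvPolynomial (Fin 3) ℝ := C (a+1)⁻¹ * s1p with hCzdef
  set Dl : MvPolynomial (Fin 3) ℝ := s0p + C (a+1)⁻¹ * (X 2 * s1p) with hDldef
  have hsum_le : ∀ m ∈ S1.support, m 0 + m 1 + m 2 ≤ d - 1 := by
    intro m hm
    calc m 0 + m 1 + m 2 = m.sum fun _ e => e := (vr_degsum m).symm
      _ ≤ S1.totalDegree := le_totalDegree hm
      _ ≤ d - 1 := hS1d
  have hs1mem : ∀ m' ∈ s1p.support, ∃ m ∈ F1, m' = m - Finsupp.single 1 1 := by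
    intro m' hm'
    obtain ⟨m, hmF, hmm⟩ := Finset.mem_biUnion.1 (MvPolynomial.support_sum (hs1p ▸ hm'))
    exact ⟨m, hmF, Finset.mem_singleton.1 (MvPolynomial.support_monomial_subset hmm)⟩
  have hs0mem : ∀ m' ∈ s0p.support, m' ∈ F0 := by
    intro m' hm'
    obtain ⟨m, hmF, hmm⟩ := Finset.mem_biUnion.1 (MvPolynomial.support_sum (hs0p ▸ hm'))
    rw [Finset.mem_singleton.1 (MvPolynomial.support_monomial_subset hmm)]
    exact hmF
  have hA1mem : ∀ m' ∈ A1.support, ∃ m ∈ F2, m' = m - Finsupp.single 1 2 := by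
    intro m' hm'
    obtain ⟨m, hmF, hmm⟩ := Finset.mem_biUnion.1 (MvPolynomial.support_sum (hA1def ▸ hm'))
    exact ⟨m, hmF, Finset.mem_singleton.1 (MvPolynomial.support_monomial_subset hmm)⟩
  have hF1empty : d < 2 → F1 = ∅ := by
    intro h2
    refine Finset.eq_empty_of_forall_notMem ?_
    intro m hm
    have h1 := hsum_le m (Finset.mem_filter.1 hm).1
    have h3 := (Finset.mem_filter.1 hm).2
    omega
  have hF2empty : d < 3 → F2 = ∅ := by
    intro h2
    refine Finset.eq_empty_of_forall_notMem ?_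
    intro m hm
    have h1 := hsum_le m (Finset.mem_filter.1 hm).1
    have h3 := (Finset.mem_filter.1 hm).2
    omega
  -- support facts
  have hCzsup : ∀ m ∈ Cz.support, m 0 = 0 ∧ m 1 = 0 := by
    intro m hm
    have hm' : m ∈ s1p.support := by
      have hsub : Cz.support ⊆ s1p.support := by
        rw [hCzdef, C_mul']; exact MvPolynomial.support_smul
      exact hsub hm
    obtain ⟨n, hnF, rfl⟩ := hs1mem _ hm'
    have hn0 : n 0 = 0 := hS1v _ (Finset.mem_filter.1 hnF).1
    have hn1 : n 1 = 1 := (Finset.mem_filter.1 hnF).2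
    constructor <;> simp [Finsupp.tsub_apply, Finsupp.single_apply, hn0, hn1]
  have hA1sup : ∀ m ∈ A1.support, m 0 = 0 := by
    intro m hm
    obtain ⟨n, hnF, rfl⟩ := hA1mem _ hm
    have hn0 : n 0 = 0 := hS1v _ (Finset.mem_filter.1 hnF).1
    simp [Finsupp.tsub_apply, Finsupp.single_apply, hn0]
  have hDlsup : ∀ m ∈ Dl.support, m 0 = 0 ∧ m 1 = 0 := by
    intro m hm
    rcases Finset.mem_union.1 (MvPolynomial.support_add (hDldef ▸ hm)) with h | h
    · have hmF := hs0mem _ h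
      have h0 := hS1v _ (Finset.mem_filter.1 hmF).1
      exact ⟨h0, (Finset.mem_filter.1 hmF).2⟩
    · have h' : m ∈ (X 2 * s1p).support := by
        have hsub : (C (a+1)⁻¹ * (X 2 * s1p)).support ⊆ (X 2 * s1p).support := by
          rw [C_mul']; exact MvPolynomial.support_smul
        exact hsub h
      rw [support_X_mul] at h'
      obtain ⟨m', hm', heq⟩ := Finset.mem_map.1 h'
      obtain ⟨n, hnF, rfl⟩ := hs1mem _ hm'
      have hn0 : n 0 = 0 := hS1v _ (Finset.mem_filter.1 hnF).1
      have hn1 : n 1 = 1 := (Finset.mem_filter.1 hnF).2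
      rw [← heq]
      constructor <;>
        simp [addLeftEmbedding_apply, Finsupp.add_apply, Finsupp.tsub_apply,
          Finsupp.single_apply, hn0, hn1]
  -- degree facts
  have hs1deg : s1p.totalDegree ≤ d - 2 := by
    rw [hs1p]
    refine totalDegree_finsetSum_le ?_
    intro m hm
    refine le_trans (totalDegree_monomial_le _ _) ?_
    rw [vr_degsum']
    have h0 := hS1v _ (Finset.mem_filter.1 hm).1
    have h1 := (Finset.mem_filter.1 hm).2
    have hs := hsum_le m (Finset.mem_filter.1 hm).1
    simp only [Finsupp.tsub_apply, Finsupp.single_apply]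
    norm_num
    omega
  have hCzdeg : Cz.totalDegree ≤ d - 2 := by
    rw [hCzdef]
    refine le_trans (totalDegree_mul _ _) ?_
    rw [totalDegree_C, zero_add]
    exact hs1deg
  have hCz0 : d < 2 → Cz = 0 := by
    intro h2
    rw [hCzdef, hs1p, hF1empty h2, Finset.sum_empty, mul_zero]
  have hA1deg : A1.totalDegree ≤ d - 3 := by
    rw [hA1def]
    refine totalDegree_finsetSum_le ?_
    intro m hm
    refine le_trans (totalDegree_monomial_le _ _) ?_
    rw [vr_degsum']
    have h0 := hS1v _ (Finset.mem_filter.1 hm).1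
    have h1 := (Finset.mem_filter.1 hm).2
    have hs := hsum_le m (Finset.mem_filter.1 hm).1
    simp only [Finsupp.tsub_apply, Finsupp.single_apply]
    norm_num
    omega
  have hA10 : d < 3 → A1 = 0 := by
    intro h2
    rw [hA1def, hF2empty h2, Finset.sum_empty]
  have hs0deg : s0p.totalDegree ≤ d - 1 := by
    rw [hs0p]
    refine totalDegree_finsetSum_le ?_
    intro m hm
    refine le_trans (totalDegree_monomial_le _ _) ?_
    rw [vr_degsum']
    exact hsum_le m (Finset.mem_filter.1 hm).1
  have hDldeg : Dl.totalDegree ≤ d - 1 := by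
    rw [hDldef]
    refine le_trans (totalDegree_add _ _) (max_le hs0deg ?_)
    by_cases h2 : d < 2
    · rw [hs1p, hF1empty h2, Finset.sum_empty, mul_zero, mul_zero, totalDegree_zero]
      exact Nat.zero_le _
    · refine le_trans (totalDegree_mul _ _) ?_
      rw [totalDegree_C, zero_add]
      refine le_trans (totalDegree_mul _ _) ?_
      rw [totalDegree_X]
      omega
  -- structural identity
  have hX1s1p : X 1 * s1p = ∑ m ∈ F1, monomial m (S1.coeff m) := by
    rw [hs1p, Finset.mul_sum]
    apply Finset.sum_congr rfl
    intro m hm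
    have hm1 : m 1 = 1 := (Finset.mem_filter.1 hm).2
    have hle : Finsupp.single 1 1 ≤ m := Finsupp.single_le_iff.2 (le_of_eq hm1.symm)
    rw [X, monomial_mul, one_mul, add_tsub_cancel_of_le hle]
  have hX1A1 : X 1 ^ 2 * A1 = ∑ m ∈ F2, monomial m (S1.coeff m) := by
    rw [hA1def, Finset.mul_sum]
    apply Finset.sum_congr rfl
    intro m hm
    have hm1 : 2 ≤ m 1 := (Finset.mem_filter.1 hm).2
    have hle : Finsupp.single 1 2 ≤ m := Finsupp.single_le_iff.2 hm1
    rw [X_pow_eq_monomial, monomial_mul, one_mul, add_tsub_cancel_of_le hle]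
  have hstruct : S1 = X 1 * s1p + X 1 ^ 2 * A1 + s0p := by
    conv_lhs => rw [← support_sum_monomial_coeff S1]
    rw [vr_part, hX1s1p, hX1A1, ← hF0def, ← hF1def, ← hF2def, hs0p]
    ring
  have hC1 : (C (a+1) : MvPolynomial (Fin 3) ℝ) * C (a+1)⁻¹ = 1 := by
    rw [← C_mul, mul_inv_cancel₀ hane, C_1]
  have hgoal : S1 = (C (a + 1) * X 1 - X 2) * Cz + (X 1) ^ 2 * A1 + Dl := by
    rw [hCzdef, hDldef]
    linear_combination hstruct - X 1 * s1p * hC1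
  -- coefficient equations from the identity
  have hS2c : ∀ m : Fin 3 →₀ ℕ, m 1 ≠ 0 → S2.coeff m = 0 := by
    intro m hm
    by_contra h
    exact hm (hS2v m (mem_support_iff.2 h))
  have hid' : C a * (S1 * X 0) - S1 * X 1 - S1 * X 2 + DX + R1 * X 0 * X 0
      = C a * (S2 * X 1) - S2 * X 0 - S2 * X 2 + DY + R2 * X 1 * X 1 := by
    linear_combination hid
  have hA : ∀ k, - S1.coeff (Finsupp.single 2 k) + DX.coeff (Finsupp.single 2 (k+1))
      = - S2.coeff (Finsupp.single 2 k) + DY.coeff (Finsupp.single 2 (k+1)) := by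
    intro k
    have hm : (Finsupp.single 2 (k+1) : Fin 3 →₀ ℕ)
        = Finsupp.single 2 k + Finsupp.single 2 1 := by rw [← Finsupp.single_add]
    have h := congrArg (MvPolynomial.coeff (Finsupp.single 2 k + Finsupp.single 2 1)) hid'
    have z1 : MvPolynomial.coeff (Finsupp.single 2 k + Finsupp.single 2 1) (S1 * X 0) = 0 :=
      vr_coeff_mul_X_eq_zero _ _ _ (by simp [Finsupp.add_apply, Finsupp.single_apply])
    have z2 : MvPolynomial.coeff (Finsupp.single 2 k + Finsupp.single 2 1) (S1 * X 1) = 0 :=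
      vr_coeff_mul_X_eq_zero _ _ _ (by simp [Finsupp.add_apply, Finsupp.single_apply])
    have z3 : MvPolynomial.coeff (Finsupp.single 2 k + Finsupp.single 2 1) (R1 * X 0 * X 0) = 0 :=
      vr_coeff_mul_X_eq_zero _ _ _ (by simp [Finsupp.add_apply, Finsupp.single_apply])
    have z4 : MvPolynomial.coeff (Finsupp.single 2 k + Finsupp.single 2 1) (S2 * X 0) = 0 :=
      vr_coeff_mul_X_eq_zero _ _ _ (by simp [Finsupp.add_apply, Finsupp.single_apply])
    have z5 : MvPolynomial.coeff (Finsupp.single 2 k + Finsupp.single 2 1) (S2 * X 1) = 0 :=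
      vr_coeff_mul_X_eq_zero _ _ _ (by simp [Finsupp.add_apply, Finsupp.single_apply])
    have z6 : MvPolynomial.coeff (Finsupp.single 2 k + Finsupp.single 2 1) (R2 * X 1 * X 1) = 0 :=
      vr_coeff_mul_X_eq_zero _ _ _ (by simp [Finsupp.add_apply, Finsupp.single_apply])
    simp only [coeff_add, coeff_sub, coeff_C_mul, coeff_mul_X, z1, z2, z3, z4, z5, z6] at h
    rw [← hm] at h
    linarith [h]
  have hB : ∀ k, - S1.coeff (Finsupp.single 2 k)
      - (if k = 0 then 0 else S1.coeff (Finsupp.single 1 1 + Finsupp.single 2 (k-1)))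
      + DX.coeff (Finsupp.single 1 1 + Finsupp.single 2 k)
      = a * S2.coeff (Finsupp.single 2 k)
        + DY.coeff (Finsupp.single 1 1 + Finsupp.single 2 k) := by
    intro k
    rcases k with _ | k
    · have hm : (Finsupp.single 1 1 + Finsupp.single 2 0 : Fin 3 →₀ ℕ)
          = Finsupp.single 2 0 + Finsupp.single 1 1 := add_comm _ _
      have h := congrArg
        (MvPolynomial.coeff (Finsupp.single 2 0 + Finsupp.single 1 1)) hid'
      have z1 : MvPolynomial.coeff (Finsupp.single 2 0 + Finsupp.single 1 1) (S1 * X 0) = 0 :=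
        vr_coeff_mul_X_eq_zero _ _ _ (by simp [Finsupp.add_apply, Finsupp.single_apply])
      have z2 : MvPolynomial.coeff (Finsupp.single 2 0 + Finsupp.single 1 1) (S1 * X 2) = 0 :=
        vr_coeff_mul_X_eq_zero _ _ _ (by simp [Finsupp.add_apply, Finsupp.single_apply])
      have z3 : MvPolynomial.coeff (Finsupp.single 2 0 + Finsupp.single 1 1)
          (R1 * X 0 * X 0) = 0 :=
        vr_coeff_mul_X_eq_zero _ _ _ (by simp [Finsupp.add_apply, Finsupp.single_apply])
      have z4 : MvPolynomial.coeff (Finsupp.single 2 0 + Finsupp.single 1 1) (S2 * X 0) = 0 :=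
        vr_coeff_mul_X_eq_zero _ _ _ (by simp [Finsupp.add_apply, Finsupp.single_apply])
      have z5 : MvPolynomial.coeff (Finsupp.single 2 0 + Finsupp.single 1 1) (S2 * X 2) = 0 :=
        vr_coeff_mul_X_eq_zero _ _ _ (by simp [Finsupp.add_apply, Finsupp.single_apply])
      have z6 : MvPolynomial.coeff (Finsupp.single 2 0) (R2 * X 1) = 0 :=
        vr_coeff_mul_X_eq_zero _ _ _ (by simp [Finsupp.single_apply])
      simp only [coeff_add, coeff_sub, coeff_C_mul, coeff_mul_X,
        z1, z2, z3, z4, z5, z6] at h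
      rw [← hm] at h
      rw [if_pos rfl]
      linarith [h]
    · have hm : (Finsupp.single 1 1 + Finsupp.single 2 (k+1) : Fin 3 →₀ ℕ)
          = Finsupp.single 2 (k+1) + Finsupp.single 1 1 := add_comm _ _
      have hm2 : (Finsupp.single 1 1 + Finsupp.single 2 (k+1) : Fin 3 →₀ ℕ)
          = (Finsupp.single 1 1 + Finsupp.single 2 k) + Finsupp.single 2 1 := by
        rw [add_assoc, ← Finsupp.single_add]
      have h := congrArg
        (MvPolynomial.coeff (Finsupp.single 1 1 + Finsupp.single 2 (k+1))) hid'
      have e1 : MvPolynomial.coeff (Finsupp.single 1 1 + Finsupp.single 2 (k+1)) (S1 * X 0) = 0 :=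
        vr_coeff_mul_X_eq_zero _ _ _ (by simp [Finsupp.add_apply, Finsupp.single_apply])
      have e2 : MvPolynomial.coeff (Finsupp.single 1 1 + Finsupp.single 2 (k+1)) (S1 * X 1)
          = S1.coeff (Finsupp.single 2 (k+1)) := by rw [hm, coeff_mul_X]
      have e3 : MvPolynomial.coeff (Finsupp.single 1 1 + Finsupp.single 2 (k+1)) (S1 * X 2)
          = S1.coeff (Finsupp.single 1 1 + Finsupp.single 2 k) := by
        rw [hm2, coeff_mul_X]
      have e4 : MvPolynomial.coeff (Finsupp.single 1 1 + Finsupp.single 2 (k+1))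
          (R1 * X 0 * X 0) = 0 :=
        vr_coeff_mul_X_eq_zero _ _ _ (by simp [Finsupp.add_apply, Finsupp.single_apply])
      have e5 : MvPolynomial.coeff (Finsupp.single 1 1 + Finsupp.single 2 (k+1)) (S2 * X 1)
          = S2.coeff (Finsupp.single 2 (k+1)) := by rw [hm, coeff_mul_X]
      have e6 : MvPolynomial.coeff (Finsupp.single 1 1 + Finsupp.single 2 (k+1)) (S2 * X 0) = 0 :=
        vr_coeff_mul_X_eq_zero _ _ _ (by simp [Finsupp.add_apply, Finsupp.single_apply])
      have e7 : MvPolynomial.coeff (Finsupp.single 1 1 + Finsupp.single 2 (k+1)) (S2 * X 2)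
          = 0 := by
        rw [hm2, coeff_mul_X]
        exact hS2c _ (by simp [Finsupp.add_apply, Finsupp.single_apply])
      have e8 : MvPolynomial.coeff (Finsupp.single 1 1 + Finsupp.single 2 (k+1))
          (R2 * X 1 * X 1) = 0 := by
        rw [hm, coeff_mul_X]
        exact vr_coeff_mul_X_eq_zero _ _ _ (by simp [Finsupp.single_apply])
      simp only [coeff_add, coeff_sub, coeff_C_mul, e1, e2, e3, e4, e5, e6, e7, e8] at h
      rw [if_neg (Nat.succ_ne_zero k), Nat.add_sub_cancel]
      linarith [h]
  have hE : ∀ k, (a+1) * S1.coeff (Finsupp.single 2 k)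
      + (if k = 0 then 0 else S1.coeff (Finsupp.single 1 1 + Finsupp.single 2 (k-1)))
      = a * (DX.coeff (Finsupp.single 2 (k+1)) - DY.coeff (Finsupp.single 2 (k+1)))
        + DX.coeff (Finsupp.single 1 1 + Finsupp.single 2 k)
        - DY.coeff (Finsupp.single 1 1 + Finsupp.single 2 k) := by
    intro k
    linear_combination - a * hA k - hB k
  -- coefficients of Dl
  have hcs0 : ∀ k, s0p.coeff (Finsupp.single 2 k) = S1.coeff (Finsupp.single 2 k) := by
    intro k
    rw [hs0p, coeff_sum]
    simp only [coeff_monomial]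
    rw [Finset.sum_ite_eq' F0 (Finsupp.single 2 k) (fun m => S1.coeff m)]
    by_cases hmem : Finsupp.single 2 k ∈ F0
    · rw [if_pos hmem]
    · rw [if_neg hmem]
      symm
      by_contra h
      exact hmem (Finset.mem_filter.2 ⟨mem_support_iff.2 h, by simp [Finsupp.single_apply]⟩)
  have hcs1 : ∀ k, s1p.coeff (Finsupp.single 2 k)
      = S1.coeff (Finsupp.single 1 1 + Finsupp.single 2 k) := by
    intro k
    rw [hs1p, coeff_sum]
    simp only [coeff_monomial]
    have hcong : ∀ m ∈ F1,
        (if m - Finsupp.single 1 1 = Finsupp.single 2 k then S1.coeff m else 0)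
        = (if m = Finsupp.single 1 1 + Finsupp.single 2 k then S1.coeff m else 0) := by
      intro m hm
      have hm1 : m 1 = 1 := (Finset.mem_filter.1 hm).2
      have hle : Finsupp.single 1 1 ≤ m := Finsupp.single_le_iff.2 (le_of_eq hm1.symm)
      refine if_congr ⟨fun h => ?_, fun h => ?_⟩ rfl rfl
      · rw [← add_tsub_cancel_of_le hle, h]
      · rw [h, add_tsub_cancel_left]
    rw [Finset.sum_congr rfl hcong,
      Finset.sum_ite_eq' F1 (Finsupp.single 1 1 + Finsupp.single 2 k) (fun m => S1.coeff m)]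
    by_cases hmem : (Finsupp.single 1 1 + Finsupp.single 2 k) ∈ F1
    · rw [if_pos hmem]
    · rw [if_neg hmem]
      symm
      by_contra h
      exact hmem (Finset.mem_filter.2 ⟨mem_support_iff.2 h,
        by simp [Finsupp.add_apply, Finsupp.single_apply]⟩)
  have hdel : ∀ k, Dl.coeff (Finsupp.single 2 k)
      = S1.coeff (Finsupp.single 2 k) + (a+1)⁻¹ *
        (if k = 0 then 0 else S1.coeff (Finsupp.single 1 1 + Finsupp.single 2 (k-1))) := by
    intro k
    rw [hDldef, coeff_add, coeff_C_mul, hcs0]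
    congr 1
    rcases k with _ | k
    · rw [vr_coeff_X_mul_eq_zero _ _ _ (by simp), if_pos rfl]
    · have hsplit : (Finsupp.single 2 (k+1) : Fin 3 →₀ ℕ)
          = Finsupp.single 2 1 + Finsupp.single 2 k := by
        rw [← Finsupp.single_add, Nat.add_comm]
      rw [hsplit, coeff_X_mul, hcs1, if_neg (Nat.succ_ne_zero k), Nat.add_sub_cancel]
  have hkey : ∀ k, Dl.coeff (Finsupp.single 2 k)
      = (a+1)⁻¹ * ((a+1) * S1.coeff (Finsupp.single 2 k)
        + (if k = 0 then 0 else S1.coeff (Finsupp.single 1 1 + Finsupp.single 2 (k-1)))) := by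
    intro k
    rw [hdel k, mul_add, ← mul_assoc, inv_mul_cancel₀ hane, one_mul]
  have hquarter : ((a+1)⁻¹)^2 ≤ 1/4 := by
    have h2 : (a+1)⁻¹ ≤ 2⁻¹ := by
      apply inv_anti₀ <;> linarith
    calc ((a+1)⁻¹)^2 ≤ (2⁻¹ : ℝ)^2 :=
          pow_le_pow_left₀ (inv_nonneg.2 (by linarith)) h2 2
      _ = 1/4 := by norm_num
  have hsq : ∀ k, (Dl.coeff (Finsupp.single 2 k))^2
      ≤ a^2 * (DX.coeff (Finsupp.single 2 (k+1)))^2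
        + a^2 * (DY.coeff (Finsupp.single 2 (k+1)))^2
        + (DX.coeff (Finsupp.single 1 1 + Finsupp.single 2 k))^2
        + (DY.coeff (Finsupp.single 1 1 + Finsupp.single 2 k))^2 := by
    intro k
    rw [hkey k, hE k]
    set p := DX.coeff (Finsupp.single 2 (k+1))
    set q := DY.coeff (Finsupp.single 2 (k+1))
    set r := DX.coeff (Finsupp.single 1 1 + Finsupp.single 2 k)
    set s := DY.coeff (Finsupp.single 1 1 + Finsupp.single 2 k)
    have h4 := vr_four_sq (a*p) (a*q) r s
    have h5 := mul_le_mul_of_nonneg_right hquarter (sq_nonneg (a*p - a*q + r - s))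
    nlinarith [h4, h5]
  -- summing up
  have hM0 : 0 ≤ max (coeffNorm DX) (coeffNorm DY) :=
    le_trans (vr_norm_nonneg DX) (le_max_left _ _)
  have hNX : coeffNormSq DX ≤ (max (coeffNorm DX) (coeffNorm DY))^2 := by
    rw [vr_normSq_eq]; exact pow_le_pow_left₀ (vr_norm_nonneg _) (le_max_left _ _) 2
  have hNY : coeffNormSq DY ≤ (max (coeffNorm DX) (coeffNorm DY))^2 := by
    rw [vr_normSq_eq]; exact pow_le_pow_left₀ (vr_norm_nonneg _) (le_max_right _ _) 2
  have hTsub : Dl.support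
      ⊆ (Finset.range d).image (fun k => (Finsupp.single 2 k : Fin 3 →₀ ℕ)) := by
    intro m hm
    obtain ⟨h0, h1⟩ := hDlsup m hm
    refine Finset.mem_image.2 ⟨m 2, Finset.mem_range.2 ?_, (vr_fin3_eq_single m h0 h1).symm⟩
    have h2 := le_totalDegree hm
    rw [vr_degsum] at h2
    have h3 := le_trans h2 hDldeg
    omega
  have hDnsq : coeffNormSq Dl = ∑ k ∈ Finset.range d, (Dl.coeff (Finsupp.single 2 k))^2 := by
    rw [show coeffNormSq Dl = ∑ m ∈ Dl.support, (Dl.coeff m)^2 from rfl,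
      Finset.sum_subset hTsub
        (fun m _ hm => by rw [MvPolynomial.notMem_support_iff.1 hm]; norm_num),
      Finset.sum_image (fun k1 _ k2 _ h => Finsupp.single_injective 2 h)]
  have hb1 : ∑ k ∈ Finset.range d, (DX.coeff (Finsupp.single 2 (k+1)))^2
      ≤ coeffNormSq DX := by
    have h := vr_sum_le DX
      ((Finset.range d).image (fun k => (Finsupp.single 2 (k+1) : Fin 3 →₀ ℕ)))
    rwa [Finset.sum_image (fun k1 _ k2 _ h => by
      have := Finsupp.single_injective 2 h; omega)] at h
  have hb2 : ∑ k ∈ Finset.range d, (DY.coeff (Finsupp.single 2 (k+1)))^2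
      ≤ coeffNormSq DY := by
    have h := vr_sum_le DY
      ((Finset.range d).image (fun k => (Finsupp.single 2 (k+1) : Fin 3 →₀ ℕ)))
    rwa [Finset.sum_image (fun k1 _ k2 _ h => by
      have := Finsupp.single_injective 2 h; omega)] at h
  have hb3 : ∑ k ∈ Finset.range d,
      (DX.coeff (Finsupp.single 1 1 + Finsupp.single 2 k))^2 ≤ coeffNormSq DX := by
    have h := vr_sum_le DX ((Finset.range d).image
      (fun k => (Finsupp.single 1 1 + Finsupp.single 2 k : Fin 3 →₀ ℕ)))
    rwa [Finset.sum_image (fun k1 _ k2 _ h => by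
      simpa [Finsupp.add_apply, Finsupp.single_apply] using DFunLike.congr_fun h 2)] at h
  have hb4 : ∑ k ∈ Finset.range d,
      (DY.coeff (Finsupp.single 1 1 + Finsupp.single 2 k))^2 ≤ coeffNormSq DY := by
    have h := vr_sum_le DY ((Finset.range d).image
      (fun k => (Finsupp.single 1 1 + Finsupp.single 2 k : Fin 3 →₀ ℕ)))
    rwa [Finset.sum_image (fun k1 _ k2 _ h => by
      simpa [Finsupp.add_apply, Finsupp.single_apply] using DFunLike.congr_fun h 2)] at h
  have hsumB : coeffNormSq Dl ≤ a^2 * coeffNormSq DX + a^2 * coeffNormSq DY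
      + coeffNormSq DX + coeffNormSq DY := by
    rw [hDnsq]
    have h1 := Finset.sum_le_sum (fun k (_ : k ∈ Finset.range d) => hsq k)
    have h2 : ∑ k ∈ Finset.range d, (a^2 * (DX.coeff (Finsupp.single 2 (k+1)))^2
        + a^2 * (DY.coeff (Finsupp.single 2 (k+1)))^2
        + (DX.coeff (Finsupp.single 1 1 + Finsupp.single 2 k))^2
        + (DY.coeff (Finsupp.single 1 1 + Finsupp.single 2 k))^2)
        = a^2 * (∑ k ∈ Finset.range d, (DX.coeff (Finsupp.single 2 (k+1)))^2)
        + a^2 * (∑ k ∈ Finset.range d, (DY.coeff (Finsupp.single 2 (k+1)))^2)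
        + (∑ k ∈ Finset.range d, (DX.coeff (Finsupp.single 1 1 + Finsupp.single 2 k))^2)
        + (∑ k ∈ Finset.range d, (DY.coeff (Finsupp.single 1 1 + Finsupp.single 2 k))^2) := by
      rw [Finset.sum_add_distrib, Finset.sum_add_distrib, Finset.sum_add_distrib,
        ← Finset.mul_sum, ← Finset.mul_sum]
    rw [h2] at h1
    have e1 := mul_le_mul_of_nonneg_left hb1 (sq_nonneg a)
    have e2 := mul_le_mul_of_nonneg_left hb2 (sq_nonneg a)
    linarith [h1, e1, e2, hb3, hb4]
  have hfinal2 : coeffNormSq Dl ≤ (2*a*(max (coeffNorm DX) (coeffNorm DY)))^2 := by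
    have e3 : coeffNormSq DX ≤ a^2 * (max (coeffNorm DX) (coeffNorm DY))^2 := by
      nlinarith [hNX, sq_nonneg (max (coeffNorm DX) (coeffNorm DY)),
        mul_nonneg (mul_nonneg (sub_nonneg.2 ha) (by linarith : (0:ℝ) ≤ a + 1))
          (sq_nonneg (max (coeffNorm DX) (coeffNorm DY)))]
    have e4 : coeffNormSq DY ≤ a^2 * (max (coeffNorm DX) (coeffNorm DY))^2 := by
      nlinarith [hNY, sq_nonneg (max (coeffNorm DX) (coeffNorm DY)),
        mul_nonneg (mul_nonneg (sub_nonneg.2 ha) (by linarith : (0:ℝ) ≤ a + 1))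
          (sq_nonneg (max (coeffNorm DX) (coeffNorm DY)))]
    have e1 := mul_le_mul_of_nonneg_left hNX (sq_nonneg a)
    have e2 := mul_le_mul_of_nonneg_left hNY (sq_nonneg a)
    nlinarith [hsumB, e1, e2, e3, e4]
  have hnorm : coeffNorm Dl ≤ 2*a*(max (coeffNorm DX) (coeffNorm DY)) := by
    have h0 : (0:ℝ) ≤ 2*a*(max (coeffNorm DX) (coeffNorm DY)) :=
      mul_nonneg (by linarith) hM0
    calc coeffNorm Dl = Real.sqrt (coeffNormSq Dl) := rfl
      _ ≤ Real.sqrt ((2*a*(max (coeffNorm DX) (coeffNorm DY)))^2) :=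
          Real.sqrt_le_sqrt hfinal2
      _ = 2*a*(max (coeffNorm DX) (coeffNorm DY)) := Real.sqrt_sq h0
  have hfin : coeffNorm Dl ≤ 20 * a * max (coeffNorm DX) (coeffNorm DY) := by
    have haM : 0 ≤ a * max (coeffNorm DX) (coeffNorm DY) :=
      mul_nonneg (by linarith) hM0
    nlinarith [hnorm, haM]
  exact ⟨Cz, A1, Dl, hCzsup, hCzdeg, hCz0, hA1sup, hA1deg, hA10,
    (fun m hm => (hDlsup m hm).1), hDldeg, hgoal, hfin⟩
end

section
/- Let T, d be positive integers with T ≥ d, and let P be a real polynomial in the variables W_1, …, W_T of total degree at most d with ‖P‖ = 1. Set η = 4^{-2^d}. For each j ∈ {1, …, T}, let R_j be the sub-polynomial of P consisting of all monomials in which the exponent of W_j is at most 1, and suppose that ‖R_j‖ ≤ η for every j ∈ {1, …, d}. Then for every j ∈ {1, …, d}, writing P = W_1²⋯W_j²·H_j + L_j where L_j is the sub-polynomial of P consisting of all monomials of P not divisible by W_1²⋯W_j², one has ‖L_j‖ ≤ 4·η^{1/2^{j−1}}. -/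
open MvPolynomial

/-- The sub-polynomial of `P` consisting of all monomials in which the exponent
of the variable `j` is at most `1` (i.e. the part of `P` not divisible by `W_j²`). -/
noncomputable def lowPart {T : ℕ} (P : MvPolynomial (Fin T) ℝ) (j : Fin T) :
    MvPolynomial (Fin T) ℝ :=
  ∑ m ∈ P.support.filter (fun m => m j ≤ 1), monomial m (P.coeff m)

/-- The sub-polynomial of `P` consisting of all monomials of `P` not divisible by
`W_1² ⋯ W_j²` (variables indexed `0, …, j-1` in `Fin T`). -/
noncomputable def notAllSqPart {T : ℕ} (P : MvPolynomial (Fin T) ℝ) (j : ℕ) :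
    MvPolynomial (Fin T) ℝ :=
  ∑ m ∈ P.support.filter (fun m => ∃ i : Fin T, (i : ℕ) < j ∧ m i ≤ 1),
    monomial m (P.coeff m)

lemma coeff_sum_monomial' {T : ℕ} (s : Finset (Fin T →₀ ℕ)) (f : (Fin T →₀ ℕ) → ℝ)
    (n : Fin T →₀ ℕ) :
    (∑ m ∈ s, monomial m (f m)).coeff n = if n ∈ s then f n else 0 := by
  rw [MvPolynomial.coeff_sum]
  simp [MvPolynomial.coeff_monomial, Finset.sum_ite_eq']

lemma coeffNormSq_sum_monomial {T : ℕ} (s : Finset (Fin T →₀ ℕ)) (f : (Fin T →₀ ℕ) → ℝ) :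
    coeffNormSq (∑ m ∈ s, monomial m (f m)) = ∑ m ∈ s, (f m) ^ 2 := by
  set Q := ∑ m ∈ s, monomial m (f m) with hQ
  have hc : ∀ n, Q.coeff n = if n ∈ s then f n else 0 := coeff_sum_monomial' s f
  have hsub : Q.support ⊆ s := by
    intro n hn
    by_contra h
    exact MvPolynomial.mem_support_iff.mp hn (by simp [hc n, h])
  rw [coeffNormSq, Finset.sum_subset hsub]
  · exact Finset.sum_congr rfl fun m hm => by simp [hc m, hm]
  · intro m _ hns
    simp [MvPolynomial.notMem_support_iff.mp hns]

lemma my_sum_union_le {α : Type*} [DecidableEq α] (s t : Finset α) (f : α → ℝ)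
    (hf : ∀ x, 0 ≤ f x) :
    ∑ x ∈ s ∪ t, f x ≤ ∑ x ∈ s, f x + ∑ x ∈ t, f x := by
  have h1 : ∑ x ∈ s ∪ t, f x + ∑ x ∈ s ∩ t, f x = ∑ x ∈ s, f x + ∑ x ∈ t, f x :=
    Finset.sum_union_inter
  have h2 : 0 ≤ ∑ x ∈ s ∩ t, f x := Finset.sum_nonneg fun x _ => hf x
  linarith

lemma my_sum_biUnion_le {ι α : Type*} [DecidableEq ι] [DecidableEq α] (s : Finset ι) (t : ι → Finset α)
    (f : α → ℝ) (hf : ∀ x, 0 ≤ f x) :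
    ∑ x ∈ s.biUnion t, f x ≤ ∑ i ∈ s, ∑ x ∈ t i, f x := by
  induction s using Finset.induction_on with
  | empty => simp
  | insert a s' ha ih =>
    rw [Finset.biUnion_insert, Finset.sum_insert ha]
    exact (my_sum_union_le _ _ f hf).trans (by linarith)

lemma key_nat (d j : ℕ) (hj1 : 1 ≤ j) (hjd : j ≤ d) :
    Real.sqrt j ≤ (4 : ℝ) ^ (1 + 2 ^ d - 2 ^ (d + 1 - j)) := by
  have hsj : Real.sqrt j ≤ (j : ℝ) := by
    have h1 : (1:ℝ) ≤ (j:ℝ) := by exact_mod_cast hj1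
    have h2 : Real.sqrt (j:ℝ) ≤ Real.sqrt ((j:ℝ)^2) := Real.sqrt_le_sqrt (by nlinarith)
    rwa [Real.sqrt_sq (by linarith)] at h2
  have hnat : j ≤ 4 ^ (1 + 2 ^ d - 2 ^ (d + 1 - j)) := by
    rcases eq_or_lt_of_le hj1 with h | h
    · have : d + 1 - j = d := by omega
      rw [this, show 1 + 2^d - 2^d = 1 by omega]
      omega
    · have he : d + 1 - j ≤ d - 1 := by omega
      have h1 : 2 ^ (d + 1 - j) ≤ 2 ^ (d - 1) := Nat.pow_le_pow_right (by norm_num) he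
      have h2 : 2 * 2 ^ (d - 1) = 2 ^ d := by
        rw [← pow_succ']; congr 1; omega
      have hk : 2 ^ (d - 1) ≤ 1 + 2 ^ d - 2 ^ (d + 1 - j) := by omega
      have h3 : (2:ℕ) ^ d ≤ 2 ^ (2 ^ d) := Nat.pow_le_pow_right (by norm_num) (Nat.lt_two_pow_self (n := d)).le
      have h4 : (2:ℕ) ^ (2 ^ d) = 4 ^ (2 ^ (d - 1)) := by
        rw [show (4:ℕ) = 2^2 from rfl, ← pow_mul]
        congr 1
        omega
      have h5 : (4:ℕ) ^ (2 ^ (d-1)) ≤ 4 ^ (1 + 2 ^ d - 2 ^ (d + 1 - j)) :=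
        Nat.pow_le_pow_right (by norm_num) hk
      calc j ≤ d := hjd
        _ ≤ 2 ^ d := (Nat.lt_two_pow_self (n := d)).le
        _ ≤ 2 ^ (2^d) := h3
        _ = 4 ^ (2 ^ (d-1)) := h4
        _ ≤ _ := h5
  calc Real.sqrt j ≤ (j : ℝ) := hsj
    _ ≤ ((4 ^ (1 + 2 ^ d - 2 ^ (d + 1 - j)) : ℕ) : ℝ) := Nat.cast_le.mpr hnat
    _ = _ := by push_cast; ring

theorem stmt3 (T d : ℕ) (hT : 1 ≤ T) (hd : 1 ≤ d) (hdT : d ≤ T)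
    (P : MvPolynomial (Fin T) ℝ) (hPd : P.totalDegree ≤ d)
    (hPn : coeffNorm P = 1)
    (hR : ∀ i : Fin T, (i : ℕ) < d → coeffNorm (lowPart P i) ≤ ((4 : ℝ) ^ (2 ^ d))⁻¹)
    (j : ℕ) (hj1 : 1 ≤ j) (hjd : j ≤ d) :
    coeffNorm (notAllSqPart P j) ≤
      4 * (((4 : ℝ) ^ (2 ^ d))⁻¹) ^ ((1 : ℝ) / 2 ^ (j - 1)) := by
  set η : ℝ := ((4 : ℝ) ^ (2 ^ d))⁻¹ with hηdef
  have hη : 0 < η := by positivity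
  set e : ℕ := d + 1 - j with hedef
  -- Step A : bound coeffNormSq of notAllSqPart
  have hA : coeffNormSq (notAllSqPart P j) =
      ∑ m ∈ P.support.filter (fun m => ∃ i : Fin T, (i : ℕ) < j ∧ m i ≤ 1),
        (P.coeff m) ^ 2 := by
    rw [notAllSqPart, coeffNormSq_sum_monomial]
  -- union bound
  set s : Finset (Fin T) := Finset.univ.filter (fun i : Fin T => (i : ℕ) < j) with hsdef
  set t : Fin T → Finset (Fin T →₀ ℕ) :=
    fun i => P.support.filter (fun m => m i ≤ 1) with htdef
  have hsubset : P.support.filter (fun m => ∃ i : Fin T, (i : ℕ) < j ∧ m i ≤ 1)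
      ⊆ s.biUnion t := by
    intro m hm
    rw [Finset.mem_filter] at hm
    obtain ⟨hms, i, hij, hmi⟩ := hm
    refine Finset.mem_biUnion.mpr ⟨i, ?_, ?_⟩
    · simp [hsdef, hij]
    · simp [htdef, hms, hmi]
  have hB : coeffNormSq (notAllSqPart P j) ≤ ∑ i ∈ s, ∑ m ∈ t i, (P.coeff m) ^ 2 := by
    rw [hA]
    refine le_trans (Finset.sum_le_sum_of_subset_of_nonneg hsubset
      (fun m _ _ => by positivity)) ?_
    exact my_sum_biUnion_le s t _ (fun m => by positivity)
  -- each inner sum is small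
  have hC : ∀ i ∈ s, ∑ m ∈ t i, (P.coeff m) ^ 2 ≤ η ^ 2 := by
    intro i hi
    have hij : (i : ℕ) < j := by simpa [hsdef] using hi
    have heq : ∑ m ∈ t i, (P.coeff m) ^ 2 = coeffNormSq (lowPart P i) := by
      rw [lowPart, coeffNormSq_sum_monomial]
    have h1 : coeffNormSq (lowPart P i) = (coeffNorm (lowPart P i)) ^ 2 := by
      rw [coeffNorm, Real.sq_sqrt]
      exact Finset.sum_nonneg fun m _ => by positivity
    rw [heq, h1]
    have h2 := hR i (lt_of_lt_of_le hij hjd)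
    have h3 : 0 ≤ coeffNorm (lowPart P i) := Real.sqrt_nonneg _
    nlinarith
  have hcard : (s.card : ℝ) ≤ (j : ℝ) := by
    have h : s.card ≤ j := by
      have h0 : s.card ≤ (Finset.range j).card := by
        refine Finset.card_le_card_of_injOn (fun i => (i : ℕ)) ?_ ?_
        · intro i hi
          have hi' : (i : ℕ) < j := by simpa [hsdef] using hi
          simpa using hi'
        · intro a _ b _ hab; exact Fin.ext hab
      simpa using h0
    exact_mod_cast h
  have hD : coeffNormSq (notAllSqPart P j) ≤ (j : ℝ) * η ^ 2 := by
    calc coeffNormSq (notAllSqPart P j) ≤ ∑ i ∈ s, ∑ m ∈ t i, (P.coeff m) ^ 2 := hB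
      _ ≤ ∑ i ∈ s, η ^ 2 := Finset.sum_le_sum hC
      _ = (s.card : ℝ) * η ^ 2 := by rw [Finset.sum_const, nsmul_eq_mul]
      _ ≤ (j : ℝ) * η ^ 2 := by nlinarith
  -- Step: coeffNorm bound
  have hE : coeffNorm (notAllSqPart P j) ≤ Real.sqrt j * η := by
    rw [coeffNorm]
    calc Real.sqrt (coeffNormSq (notAllSqPart P j)) ≤ Real.sqrt ((j : ℝ) * η ^ 2) :=
          Real.sqrt_le_sqrt hD
      _ = Real.sqrt j * η := by
          rw [Real.sqrt_mul (by positivity), Real.sqrt_sq hη.le]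
  -- rewrite the RHS
  have he_le : (2:ℕ) ^ e ≤ 2 ^ d := Nat.pow_le_pow_right (by norm_num) (by omega)
  have hRHS : η ^ ((1 : ℝ) / 2 ^ (j - 1)) = ((4 : ℝ) ^ (2 ^ e))⁻¹ := by
    rw [hηdef]
    rw [← Real.rpow_natCast (4 : ℝ) (2 ^ d), ← Real.rpow_natCast (4 : ℝ) (2 ^ e),
        ← Real.rpow_neg (by norm_num), ← Real.rpow_neg (by norm_num),
        ← Real.rpow_mul (by norm_num)]
    congr 1
    have hsplit : (2:ℝ) ^ e * (2:ℝ) ^ (j - 1) = (2:ℝ) ^ d := by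
      rw [← pow_add]
      congr 1
      omega
    have hne : ((2 : ℝ) ^ (j - 1)) ≠ 0 := by positivity
    push_cast
    field_simp
    linarith [hsplit]
  rw [hRHS]
  -- final numeric inequality
  set k : ℕ := 1 + 2 ^ d - 2 ^ e with hkdef
  have hkey : Real.sqrt j ≤ (4 : ℝ) ^ k := key_nat d j hj1 hjd
  have hpow : (4 : ℝ) ^ k * η = 4 * ((4 : ℝ) ^ (2 ^ e))⁻¹ := by
    rw [hηdef]
    have h1 : (4 : ℝ) ^ k * (4 : ℝ) ^ (2 ^ e) = 4 * (4 : ℝ) ^ (2 ^ d) := by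
      rw [← pow_add, show k + 2 ^ e = 1 + 2 ^ d by omega]
      ring
    have h2 : ((4:ℝ) ^ (2^e)) ≠ 0 := by positivity
    have h3 : ((4:ℝ) ^ (2^d)) ≠ 0 := by positivity
    field_simp
    linarith [h1]
  calc coeffNorm (notAllSqPart P j) ≤ Real.sqrt j * η := hE
    _ ≤ (4 : ℝ) ^ k * η := by nlinarith [Real.sqrt_nonneg (j:ℝ)]
    _ = 4 * ((4 : ℝ) ^ (2 ^ e))⁻¹ := hpow
end

section
/- Let n ≥ 1 and let A, B ⊆ {1, …, n} be disjoint sets of indices. Suppose a real polynomial P in the variables X_1, …, X_n can be written as P = q(ℓ_1, …, ℓ_m), where q is a real polynomial in m variables and each ℓ_a is a linear form ℓ_a(x) = Σ_{i=1}^n v_{a,i} x_i whose coefficient vector v_a satisfies Σ_{i∈A} v_{a,i} = Σ_{i∈B} v_{a,i}. Then for every monomial M whose support is disjoint from A ∪ B, one has Σ_{i∈A} coeff(P, M·X_i) = Σ_{i∈B} coeff(P, M·X_i). -/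
open MvPolynomial

private lemma coeff_pderiv_of_zero {n : ℕ} (i : Fin n) (M : Fin n →₀ ℕ) (hM : M i = 0)
    (P : MvPolynomial (Fin n) ℝ) :
    (pderiv i P).coeff M = P.coeff (M + Finsupp.single i 1) := by
  induction P using MvPolynomial.induction_on' with
  | monomial s a =>
    rw [pderiv_monomial, coeff_monomial, coeff_monomial]
    by_cases hs : s i = 0
    · have h1 : s ≠ M + Finsupp.single i 1 := by
        intro h
        apply absurd hs
        simp [h, Finsupp.add_apply, hM]
      have h2 : s - Finsupp.single i 1 ≠ M ∨ a * (s i : ℝ) = 0 := by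
        right; simp [hs]
      rcases h2 with h2 | h2
      · simp [hs, if_neg h1]
      · simp [hs, if_neg h1]
    · have key : (s - Finsupp.single i 1 = M) ↔ (s = M + Finsupp.single i 1) := by
        constructor
        · intro h
          ext j
          by_cases hj : j = i
          · subst hj
            have := congrArg (fun f => f j + 1) h
            simp [Finsupp.tsub_apply, Finsupp.single_apply, Finsupp.add_apply] at this ⊢
            omega
          · have := congrArg (fun f => f j) h
            simp [Finsupp.tsub_apply, Finsupp.single_apply, hj, Ne.symm hj,
              Finsupp.add_apply] at this ⊢
            omega
        · intro h
          subst h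
          ext j
          by_cases hj : j = i
          · subst hj
            simp [Finsupp.tsub_apply, Finsupp.single_apply, Finsupp.add_apply, hM]
          · simp [Finsupp.tsub_apply, Finsupp.single_apply, hj, Ne.symm hj, Finsupp.add_apply]
      by_cases h : s = M + Finsupp.single i 1
      · have hsi : s i = M i + 1 := by simp [h, Finsupp.add_apply, Finsupp.single_apply]
        rw [if_pos (key.mpr h), if_pos h, hsi, hM]
        push_cast; ring
      · rw [if_neg (fun hc => h (key.mp hc)), if_neg h]
  | add p q hp hq =>
    simp [map_add, coeff_add, hp, hq]

/-- Polynomial folding lemma: a polynomial representable over linear forms whose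
coefficient vectors have equal mass-sums on `A` and on `B` satisfies all valid
folding constraints. -/
theorem stmt5 (n : ℕ) (hn : 1 ≤ n) (A B : Finset (Fin n)) (hAB : Disjoint A B)
    (P : MvPolynomial (Fin n) ℝ) (m : ℕ) (q : MvPolynomial (Fin m) ℝ)
    (v : Fin m → Fin n → ℝ)
    (hv : ∀ a : Fin m, ∑ i ∈ A, v a i = ∑ i ∈ B, v a i)
    (hP : P = MvPolynomial.aeval
      (fun a : Fin m => ∑ i : Fin n, MvPolynomial.C (v a i) * MvPolynomial.X i) q)
    (M : Fin n →₀ ℕ) (hMA : ∀ i ∈ M.support, i ∉ A) (hMB : ∀ i ∈ M.support, i ∉ B) :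
    ∑ i ∈ A, P.coeff (M + Finsupp.single i 1)
      = ∑ i ∈ B, P.coeff (M + Finsupp.single i 1) := by
  classical
  set ℓ : Fin m → MvPolynomial (Fin n) ℝ :=
    fun a : Fin m => ∑ i : Fin n, MvPolynomial.C (v a i) * MvPolynomial.X i with hℓ
  set D : MvPolynomial (Fin n) ℝ → MvPolynomial (Fin n) ℝ :=
    fun f => (∑ i ∈ A, pderiv i f) - (∑ i ∈ B, pderiv i f) with hD
  have D_add : ∀ f g, D (f + g) = D f + D g := by
    intro f g; simp only [hD, map_add, Finset.sum_add_distrib]; ring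
  have D_C : ∀ r : ℝ, D (C r) = 0 := by
    intro r; simp [hD, pderiv_C]
  have D_mul : ∀ f g, D (f * g) = D f * g + f * D g := by
    intro f g
    simp only [hD, pderiv_mul, Finset.sum_add_distrib, ← Finset.sum_mul, ← Finset.mul_sum]
    ring
  have D_ell : ∀ a : Fin m, D (ℓ a) = 0 := by
    intro a
    have hpd : ∀ i : Fin n, pderiv i (ℓ a) = C (v a i) := by
      intro i
      simp only [hℓ, map_sum, pderiv_C_mul]
      rw [Finset.sum_eq_single i]
      · simp
      · intro j _ hj; rw [pderiv_X_of_ne hj, mul_zero]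
      · simp
    simp only [hD, hpd, ← map_sum, hv a, sub_self]
  have key : ∀ q' : MvPolynomial (Fin m) ℝ, D (aeval ℓ q') = 0 := by
    intro q'
    induction q' using MvPolynomial.induction_on with
    | C r => rw [aeval_C]; exact D_C r
    | add p q hp hq => rw [map_add, D_add, hp, hq, add_zero]
    | mul_X p a hp =>
      rw [map_mul, aeval_X, D_mul, hp, D_ell, zero_mul, mul_zero, add_zero]
  have key : D P = 0 := by rw [hP]; exact key q
  have hcoeff : ∀ i, i ∈ A ∨ i ∈ B →
      (pderiv i P).coeff M = P.coeff (M + Finsupp.single i 1) := by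
    intro i hi
    apply coeff_pderiv_of_zero
    by_contra h
    have : i ∈ M.support := Finsupp.mem_support_iff.mpr h
    rcases hi with hi | hi
    · exact hMA i this hi
    · exact hMB i this hi
  have := congrArg (fun f => MvPolynomial.coeff M f) key
  simp only [hD, coeff_sub, coeff_zero, coeff_sum] at this
  have hA : ∑ i ∈ A, (pderiv i P).coeff M = ∑ i ∈ A, P.coeff (M + Finsupp.single i 1) :=
    Finset.sum_congr rfl fun i hi => hcoeff i (Or.inl hi)
  have hB : ∑ i ∈ B, (pderiv i P).coeff M = ∑ i ∈ B, P.coeff (M + Finsupp.single i 1) :=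
    Finset.sum_congr rfl fun i hi => hcoeff i (Or.inr hi)
  rw [hA, hB] at this
  linarith
end

section
/- Let k ≥ 1, let c_1, …, c_k be real numbers with Σ_{i=1}^k c_i² > 0, let ε ∈ (0,1) and ν > 0, and suppose that c_i² ≤ ν²·(Σ_{j=1}^k c_j²) for every i. Let ξ_1, …, ξ_k be independent {0,1}-valued random variables on a probability space, each with probability ε of equaling 1. Then the probability that Σ_{i=1}^k ξ_i·c_i² ≤ (ε/2)·Σ_{i=1}^k c_i² is at most 2·exp(−ε²/(2ν²)). -/
open MeasureTheory ProbabilityTheory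

lemma bern_mgf_le (ε : ℝ) (hε0 : 0 < ε) (hε1 : ε < 1) {u : ℝ} (hu : u ≤ 0) :
    1 - ε + ε * Real.exp u ≤ Real.exp (ε * u + u ^ 2 / 8) := by
  have hD : ∀ x : ℝ, 0 < 1 - ε + ε * Real.exp x := fun x => by
    nlinarith [Real.exp_pos x]
  set h : ℝ → ℝ := fun x => ε * x + x ^ 2 / 8 - Real.log (1 - ε + ε * Real.exp x) with hh
  set g : ℝ → ℝ := fun x => ε + x / 4 - ε * Real.exp x / (1 - ε + ε * Real.exp x) with hg
  have hDd : ∀ x : ℝ, HasDerivAt (fun y => 1 - ε + ε * Real.exp y) (ε * Real.exp x) x := by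
    intro x
    exact ((hasDerivAt_const x (1 - ε)).add ((Real.hasDerivAt_exp x).const_mul ε)).congr_deriv (by ring)
  have hhd : ∀ x : ℝ, HasDerivAt h (g x) x := by
    intro x
    have h1 : HasDerivAt (fun y : ℝ => ε * y + y ^ 2 / 8) (ε + x * 2 / 8) x := by
      have := ((hasDerivAt_id x).const_mul ε).add
        (((hasDerivAt_pow 2 x)).div_const 8)
      exact this.congr_deriv (by push_cast; ring)
    have h2 : HasDerivAt (fun y => Real.log (1 - ε + ε * Real.exp y))
        (ε * Real.exp x / (1 - ε + ε * Real.exp x)) x := (hDd x).log (hD x).ne'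
    have := h1.sub h2
    refine this.congr_deriv ?_
    simp only [hg]; ring
  have hgd : ∀ x : ℝ, HasDerivAt g
      (1/4 - ε * Real.exp x * (1 - ε) / (1 - ε + ε * Real.exp x) ^ 2) x := by
    intro x
    have h1 : HasDerivAt (fun y : ℝ => ε + y / 4) (1/4) x := by
      exact ((hasDerivAt_const x ε).add ((hasDerivAt_id x).div_const 4)).congr_deriv (by ring)
    have h2 : HasDerivAt (fun y => ε * Real.exp y / (1 - ε + ε * Real.exp y))
        ((ε * Real.exp x * (1 - ε + ε * Real.exp x) - ε * Real.exp x * (ε * Real.exp x))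
          / (1 - ε + ε * Real.exp x) ^ 2) x :=
      ((Real.hasDerivAt_exp x).const_mul ε).div (hDd x) (hD x).ne'
    have := h1.sub h2
    refine this.congr_deriv ?_
    have hx := hD x
    field_simp
    ring
  have hgmono : Monotone g := by
    apply monotone_of_deriv_nonneg (fun x => (hgd x).differentiableAt)
    intro x
    rw [(hgd x).deriv]
    have h1 := hD x
    have h2 := Real.exp_pos x
    rw [sub_nonneg, div_le_iff₀ (by positivity)]
    nlinarith [sq_nonneg (1 - ε - ε * Real.exp x)]
  have hg0 : g 0 = 0 := by simp [hg]
  have hanti : AntitoneOn h (Set.Iic 0) := by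
    apply antitoneOn_of_deriv_nonpos (convex_Iic 0)
    · exact fun x _ => ((hhd x).differentiableAt).continuousAt.continuousWithinAt
    · exact fun x _ => ((hhd x).differentiableAt).differentiableWithinAt
    · intro x hx
      rw [(hhd x).deriv]
      rw [interior_Iic] at hx
      calc g x ≤ g 0 := hgmono (le_of_lt hx)
        _ = 0 := hg0
  have h0 : h 0 = 0 := by simp [hh]
  have hu0 : 0 ≤ h u := by
    have := hanti (Set.mem_Iic.mpr hu) (Set.mem_Iic.mpr le_rfl) hu
    rw [h0] at this; exact this
  have : Real.log (1 - ε + ε * Real.exp u) ≤ ε * u + u ^ 2 / 8 := by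
    simp only [hh] at hu0; linarith
  calc 1 - ε + ε * Real.exp u = Real.exp (Real.log (1 - ε + ε * Real.exp u)) :=
        (Real.exp_log (hD u)).symm
    _ ≤ _ := Real.exp_le_exp.mpr this

theorem stmt6 {Ω : Type*} [MeasurableSpace Ω] (μ : Measure Ω) [IsProbabilityMeasure μ]
    (k : ℕ) (hk : 1 ≤ k) (c : Fin k → ℝ) (hc : 0 < ∑ i, (c i) ^ 2)
    (ε ν : ℝ) (hε0 : 0 < ε) (hε1 : ε < 1) (hν : 0 < ν)
    (hcb : ∀ i, (c i) ^ 2 ≤ ν ^ 2 * ∑ j, (c j) ^ 2)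
    (ξ : Fin k → Ω → ℝ) (hmeas : ∀ i, Measurable (ξ i))
    (h01 : ∀ i ω, ξ i ω = 0 ∨ ξ i ω = 1)
    (hind : iIndepFun ξ μ)
    (hprob : ∀ i, μ {ω | ξ i ω = 1} = ENNReal.ofReal ε) :
    μ {ω | ∑ i, ξ i ω * (c i) ^ 2 ≤ ε / 2 * ∑ i, (c i) ^ 2}
      ≤ ENNReal.ofReal (2 * Real.exp (-ε ^ 2 / (2 * ν ^ 2))) := by
  classical
  set S : ℝ := ∑ i, (c i) ^ 2 with hSdef
  set a : Fin k → ℝ := fun i => (c i) ^ 2 with hadef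
  have haS : ∑ i, a i = S := rfl
  have ha : ∀ i, 0 ≤ a i := fun i => sq_nonneg _
  set t : ℝ := -(2 * ε) / (ν ^ 2 * S) with htdef
  have ht : t < 0 := by
    apply div_neg_of_neg_of_pos
    · linarith
    · positivity
  set Y : Fin k → Ω → ℝ := fun i ω => ξ i ω * a i with hYdef
  have hYmeas : ∀ i, Measurable (Y i) := fun i => (hmeas i).mul_const _
  have hYind : iIndepFun Y μ :=
    hind.comp (fun i x => x * a i) (fun i => measurable_mul_const _)
  have hξnn : ∀ i ω, 0 ≤ ξ i ω := by
    intro i ω; rcases h01 i ω with h | h <;> rw [h] <;> norm_num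
  -- integrability of exp (t * Y i)
  have hint : ∀ i, Integrable (fun ω => Real.exp (t * Y i ω)) μ := by
    intro i
    refine Integrable.mono' (integrable_const 1)
      (((hYmeas i).const_mul t).exp.aestronglyMeasurable) (ae_of_all _ fun ω => ?_)
    rw [Real.norm_eq_abs, abs_of_nonneg (Real.exp_pos _).le, Real.exp_le_one_iff]
    exact mul_nonpos_of_nonpos_of_nonneg ht.le (mul_nonneg (hξnn i ω) (ha i))
  -- integrability of ξ i
  have hξint : ∀ i, Integrable (ξ i) μ := by
    intro i
    refine Integrable.mono' (integrable_const 1)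
      ((hmeas i).aestronglyMeasurable) (ae_of_all _ fun ω => ?_)
    rcases h01 i ω with h | h <;> rw [h] <;> norm_num
  have hξinteg : ∀ i, ∫ ω, ξ i ω ∂μ = ε := by
    intro i
    have hset : MeasurableSet {ω | ξ i ω = 1} := (hmeas i) (measurableSet_singleton 1)
    have heq : ξ i = Set.indicator {ω | ξ i ω = 1} (fun _ => (1 : ℝ)) := by
      funext ω
      by_cases h : ξ i ω = 1
      · simp [Set.indicator_apply, Set.mem_setOf_eq, h]
      · have h' : ξ i ω = 0 := (h01 i ω).resolve_right h
        simp [Set.indicator_apply, Set.mem_setOf_eq, h, h']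
    rw [heq, integral_indicator_const _ hset, measureReal_def, hprob i, smul_eq_mul, mul_one,
      ENNReal.toReal_ofReal hε0.le]
  -- mgf of each Y i
  have hmgf : ∀ i, mgf (Y i) μ t = 1 - ε + ε * Real.exp (t * a i) := by
    intro i
    have hptw : (fun ω => Real.exp (t * Y i ω))
        = fun ω => 1 + ξ i ω * (Real.exp (t * a i) - 1) := by
      funext ω
      rcases h01 i ω with h | h <;> simp [hYdef, h, mul_assoc]
    rw [mgf, hptw]
    rw [integral_add (integrable_const 1) ((hξint i).mul_const _)]
    rw [integral_const, integral_mul_const, hξinteg i]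
    simp [measure_univ]
    ring
  have hmgf_le : ∀ i, mgf (Y i) μ t ≤ Real.exp (ε * (t * a i) + (t * a i) ^ 2 / 8) := by
    intro i
    rw [hmgf i]
    exact bern_mgf_le ε hε0 hε1
      (mul_nonpos_of_nonpos_of_nonneg ht.le (ha i))
  -- Chernoff
  have hintsum : Integrable (fun ω => Real.exp (t * (∑ i, Y i) ω)) μ :=
    hYind.integrable_exp_mul_sum hYmeas (fun i _ => hint i)
  have hchern := measure_le_le_exp_mul_mgf (X := ∑ i, Y i) (μ := μ) (t := t)
    (ε / 2 * S) ht.le hintsum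
  have hseteq : {ω | ∑ i, ξ i ω * (c i) ^ 2 ≤ ε / 2 * ∑ i, (c i) ^ 2}
      = {ω | (∑ i, Y i) ω ≤ ε / 2 * S} := by
    ext ω
    simp [hYdef, Finset.sum_apply]
    exact Iff.rfl
  -- bound the mgf product
  have hprod : mgf (∑ i, Y i) μ t ≤ Real.exp (ε * t * S + t ^ 2 / 8 * ∑ i, (a i) ^ 2) := by
    rw [hYind.mgf_sum hYmeas Finset.univ]
    calc ∏ i, mgf (Y i) μ t
        ≤ ∏ i, Real.exp (ε * (t * a i) + (t * a i) ^ 2 / 8) :=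
          Finset.prod_le_prod (fun i _ => mgf_nonneg) (fun i _ => hmgf_le i)
      _ = Real.exp (∑ i, (ε * (t * a i) + (t * a i) ^ 2 / 8)) := by
          rw [← Real.exp_sum]
      _ = Real.exp (ε * t * S + t ^ 2 / 8 * ∑ i, (a i) ^ 2) := by
          congr 1
          have e1 : ∑ i, ε * (t * a i) = ε * t * S := by
            rw [← haS, Finset.mul_sum]
            exact Finset.sum_congr rfl fun i _ => by ring
          have e2 : ∑ i, (t * a i) ^ 2 / 8 = t ^ 2 / 8 * ∑ i, (a i) ^ 2 := by
            rw [Finset.mul_sum]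
            exact Finset.sum_congr rfl fun i _ => by ring
          rw [Finset.sum_add_distrib, e1, e2]
  have hsum2 : ∑ i, (a i) ^ 2 ≤ ν ^ 2 * S * S := by
    calc ∑ i, (a i) ^ 2 = ∑ i, a i * a i := by simp [sq]
      _ ≤ ∑ i, (ν ^ 2 * S) * a i := by
          refine Finset.sum_le_sum fun i _ => ?_
          exact mul_le_mul_of_nonneg_right (hcb i) (ha i)
      _ = ν ^ 2 * S * S := by rw [← Finset.mul_sum, haS]
  have hmgf_le2 : mgf (∑ i, Y i) μ t ≤ Real.exp (ε * t * S + t ^ 2 / 8 * (ν ^ 2 * S * S)) := by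
    refine hprod.trans (Real.exp_le_exp.mpr ?_)
    have : (0:ℝ) ≤ t ^ 2 / 8 := by positivity
    nlinarith [hsum2]
  -- put it together
  have hkey : (μ {ω | (∑ i, Y i) ω ≤ ε / 2 * S}).toReal
      ≤ Real.exp (-ε ^ 2 / (2 * ν ^ 2)) := by
    refine hchern.trans ?_
    calc Real.exp (-t * (ε / 2 * S)) * mgf (∑ i, Y i) μ t
        ≤ Real.exp (-t * (ε / 2 * S)) * Real.exp (ε * t * S + t ^ 2 / 8 * (ν ^ 2 * S * S)) := by
          exact mul_le_mul_of_nonneg_left hmgf_le2 (Real.exp_pos _).le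
      _ = Real.exp (-t * (ε / 2 * S) + (ε * t * S + t ^ 2 / 8 * (ν ^ 2 * S * S))) := by
          rw [← Real.exp_add]
      _ = Real.exp (-ε ^ 2 / (2 * ν ^ 2)) := by
          congr 1
          rw [htdef]
          have hS0 : S ≠ 0 := ne_of_gt hc
          have hν0 : ν ≠ 0 := ne_of_gt hν
          field_simp
          ring
  rw [hseteq]
  calc μ {ω | (∑ i, Y i) ω ≤ ε / 2 * S}
      = ENNReal.ofReal ((μ {ω | (∑ i, Y i) ω ≤ ε / 2 * S}).toReal) :=
        (ENNReal.ofReal_toReal (measure_ne_top μ _)).symm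
    _ ≤ ENNReal.ofReal (2 * Real.exp (-ε ^ 2 / (2 * ν ^ 2))) := by
        refine ENNReal.ofReal_le_ofReal (hkey.trans ?_)
        nlinarith [Real.exp_pos (-ε ^ 2 / (2 * ν ^ 2))]
end

section
/- Let d ≥ 1 be an integer, let ρ be a real number with 0 < ρ ≤ 1/2, and let a_0, a_1, …, a_d be nonnegative real numbers with a_d = 0 and A := Σ_{D=0}^{d−1} a_D > 0. Then there exists d* ∈ {0, 1, …, d−1} such that a_{d*} ≥ (1/4)·ρ^{d*}·A and a_{d*+1} ≤ (1/4)·ρ^{d*+1}·A. -/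
theorem stmt7 (d : ℕ) (hd : 1 ≤ d) (ρ : ℝ) (hρ0 : 0 < ρ) (hρ1 : ρ ≤ 1 / 2)
    (a : ℕ → ℝ) (hnn : ∀ D, D ≤ d → 0 ≤ a D) (had : a d = 0)
    (hA : 0 < ∑ D ∈ Finset.range d, a D) :
    ∃ dstar : ℕ, dstar < d ∧
      a dstar ≥ 1 / 4 * ρ ^ dstar * ∑ D ∈ Finset.range d, a D ∧
      a (dstar + 1) ≤ 1 / 4 * ρ ^ (dstar + 1) * ∑ D ∈ Finset.range d, a D := by
  set A := ∑ D ∈ Finset.range d, a D with hAdef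
  set T := (Finset.range d).filter (fun D => 1 / 4 * ρ ^ D * A ≤ a D) with hT
  have hTne : T.Nonempty := by
    by_contra h
    rw [Finset.not_nonempty_iff_eq_empty] at h
    have hlt : ∀ D ∈ Finset.range d, a D < 1 / 4 * ρ ^ D * A := by
      intro D hD
      by_contra hc
      push_neg at hc
      have : D ∈ T := Finset.mem_filter.mpr ⟨hD, hc⟩
      simp [h] at this
    have hsum : A < ∑ D ∈ Finset.range d, 1 / 4 * ρ ^ D * A := by
      rw [hAdef]
      apply Finset.sum_lt_sum_of_nonempty
      · exact ⟨0, Finset.mem_range.mpr hd⟩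
      · exact hlt
    have hgeo : ∑ D ∈ Finset.range d, 1 / 4 * ρ ^ D * A ≤ 1 / 2 * A := by
      have h1 : ∑ D ∈ Finset.range d, 1 / 4 * ρ ^ D * A
          = 1 / 4 * A * ∑ D ∈ Finset.range d, ρ ^ D := by
        rw [Finset.mul_sum]; apply Finset.sum_congr rfl; intro x _; ring
      rw [h1]
      have h2 : ∑ D ∈ Finset.range d, ρ ^ D ≤ ∑ D ∈ Finset.range d, (1/2:ℝ) ^ D := by
        apply Finset.sum_le_sum
        intro i _
        exact pow_le_pow_left₀ hρ0.le hρ1 i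
      have h3 : ∑ D ∈ Finset.range d, (1/2:ℝ) ^ D ≤ 2 := by
        simpa using sum_geometric_two_le d
      nlinarith
    linarith
  refine ⟨T.max' hTne, ?_, ?_, ?_⟩
  · have := T.max'_mem hTne
    exact Finset.mem_range.mp (Finset.mem_filter.mp this).1
  · exact (Finset.mem_filter.mp (T.max'_mem hTne)).2
  · set m := T.max' hTne with hm
    have hmd : m < d := Finset.mem_range.mp (Finset.mem_filter.mp (T.max'_mem hTne)).1
    rcases eq_or_lt_of_le (Nat.succ_le_of_lt hmd) with h | h
    · rw [← h] at had
      rw [had]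
      positivity
    · by_contra hc
      push_neg at hc
      have : m + 1 ∈ T := Finset.mem_filter.mpr ⟨Finset.mem_range.mpr h, hc.le⟩
      have := Finset.le_max' T _ this
      omega
end
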